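/- arXiv:2306.13570 — 5 statements merged into one kernel-verified Lean document; each statement's English description precedes it below -/
import Mathlib

section
/- Let J ∈ ℝ^{n×n} be in Jordan normal form with distinct real eigenvalues λ_1,…,λ_l, where λ_i has α_i Jordan blocks of sizes r_{i1},…,r_{iα_i}, and let B̂ ∈ ℝ^{n×m}. Then the pair (J, B̂) is completely controllable (the span of the columns of [B̂, JB̂, …, J^{n−1}B̂] is all of ℝ^n) if and only if for every i = 1,…,l the α_i rows b_{ri1},…,b_{riα_i} of B̂ (the rows of B̂ aligned with the last row of each Jordan block of λ_i) are linearly independent. -/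
open Matrix

/-- A single real Jordan block of size `s` with eigenvalue `lam`:
`lam` on the diagonal, `1` on the superdiagonal, `0` elsewhere. -/
def jordanBlock (lam : ℝ) (s : ℕ) : Matrix (Fin s) (Fin s) ℝ :=
  Matrix.of fun a b => if (b : ℕ) = (a : ℕ) then lam
    else if (b : ℕ) = (a : ℕ) + 1 then 1 else 0

/-- Index type for a Jordan matrix: eigenvalue index `i` (of `l` eigenvalues),
block index `k` (of the `α i` blocks of the `i`-th eigenvalue), and a position
inside the block of size `r i k`. -/
abbrev JIdx (l : ℕ) (α : Fin l → ℕ) (r : (i : Fin l) → Fin (α i) → ℕ) : Type :=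
  (p : (i : Fin l) × Fin (α i)) × Fin (r p.1 p.2)

/-- The Jordan normal form matrix: block-diagonal direct sum of the Jordan blocks
`J_k(λ_i)` of sizes `r i k`. -/
def jordanMatrix (l : ℕ) (lam : Fin l → ℝ) (α : Fin l → ℕ)
    (r : (i : Fin l) → Fin (α i) → ℕ) :
    Matrix (JIdx l α r) (JIdx l α r) ℝ :=
  Matrix.blockDiagonal' fun p => jordanBlock (lam p.1) (r p.1 p.2)

/-- The controllable subspace of the pair `(J, B)`: the span of the columns of the
controllability matrix `[B, JB, …, J^{n-1}B]`, where `n` is the state dimension. -/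
noncomputable def ctrlSubspace {ι : Type} [Fintype ι] [DecidableEq ι] {m : ℕ}
    (J : Matrix ι ι ℝ) (B : Matrix ι (Fin m) ℝ) : Submodule ℝ (ι → ℝ) :=
  ⨆ j ∈ Finset.range (Fintype.card ι), LinearMap.range (J ^ j * B).mulVecLin

/-- The row `b_{rik}` of `Bhat` aligned with the last row of the Jordan block
`J_k(λ_i)`. -/
def lastRow {l : ℕ} {α : Fin l → ℕ} {r : (i : Fin l) → Fin (α i) → ℕ}
    (hr : ∀ i k, 0 < r i k) {m : ℕ} (Bhat : Matrix (JIdx l α r) (Fin m) ℝ)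
    (i : Fin l) (k : Fin (α i)) : Fin m → ℝ :=
  fun c => Bhat ⟨⟨i, k⟩, ⟨r i k - 1, Nat.sub_lt (hr i k) Nat.one_pos⟩⟩ c


section Stmt0Aux

lemma jordanBlock_sub_apply (μ : ℝ) (s : ℕ) (a b : Fin s) :
    (jordanBlock μ s - μ • 1) a b = if (b : ℕ) = (a : ℕ) + 1 then 1 else 0 := by
  simp only [Matrix.sub_apply, Matrix.smul_apply, Matrix.one_apply, jordanBlock, Matrix.of_apply,
    smul_eq_mul]
  rcases eq_or_ne a b with h | h
  · subst h; simp
  · rw [if_neg h, mul_zero, sub_zero, if_neg]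
    intro hc; exact h (Fin.ext hc.symm)

lemma jordanBlock_sub_pow (μ : ℝ) (s : ℕ) (j : ℕ) :
    (jordanBlock μ s - μ • 1) ^ j =
      Matrix.of (fun a b : Fin s => if (b : ℕ) = (a : ℕ) + j then (1:ℝ) else 0) := by
  induction j with
  | zero =>
    ext a b
    simp [Matrix.one_apply, Fin.ext_iff, eq_comm]
  | succ j ih =>
    ext a b
    rw [pow_succ, ih]
    simp only [Matrix.mul_apply, Matrix.of_apply, jordanBlock_sub_apply]
    by_cases hb : (b : ℕ) = (a : ℕ) + j + 1
    · have hlt : (a : ℕ) + j < s := by omega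
      rw [Finset.sum_eq_single (⟨(a : ℕ) + j, hlt⟩ : Fin s)]
      · simp [hb]
        norm_num [Nat.add_assoc]
      · intro c _ hc
        rw [if_neg, zero_mul]
        intro h; exact hc (Fin.ext h)
      · simp
    · rw [if_neg (by omega), Finset.sum_eq_zero]
      intro c _
      split_ifs with h1 h2
      · omega
      · exact mul_zero _
      · exact zero_mul _
      · exact zero_mul _

lemma jordanBlock_sub_pow_eq_zero (μ : ℝ) (s : ℕ) {j : ℕ} (h : s ≤ j) :
    (jordanBlock μ s - μ • 1) ^ j = 0 := by
  rw [jordanBlock_sub_pow]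
  ext a b
  simp only [Matrix.of_apply, Matrix.zero_apply, ite_eq_right_iff]
  intro hc; exfalso; omega

variable {l m : ℕ} {lam : Fin l → ℝ} {α : Fin l → ℕ} {r : (i : Fin l) → Fin (α i) → ℕ}

lemma vecMul_jordanMatrix_apply (lam : Fin l → ℝ) (w : JIdx l α r → ℝ)
    (p : (i : Fin l) × Fin (α i)) (c : Fin (r p.1 p.2)) :
    (w ᵥ* jordanMatrix l lam α r) ⟨p, c⟩ =
      lam p.1 * w ⟨p, c⟩ +
        (if h : 0 < (c : ℕ) then
          w ⟨p, ⟨(c : ℕ) - 1, Nat.lt_of_le_of_lt (Nat.sub_le _ _) c.isLt⟩⟩ else 0) := by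
  classical
  have hsum : (w ᵥ* jordanMatrix l lam α r) ⟨p, c⟩
      = ∑ y : JIdx l α r, w y * jordanMatrix l lam α r y ⟨p, c⟩ := rfl
  rw [hsum, ← Finset.univ_sigma_univ, Finset.sum_sigma]
  rw [Finset.sum_eq_single p]
  rotate_left
  · intro q _ hq
    apply Finset.sum_eq_zero; intro d _
    rw [jordanMatrix, blockDiagonal'_apply_ne _ _ _ hq, mul_zero]
  · intro h; exact absurd (Finset.mem_univ p) h
  have hJ : ∀ d : Fin (r p.1 p.2),
      jordanMatrix l lam α r ⟨p, d⟩ ⟨p, c⟩ = jordanBlock (lam p.1) (r p.1 p.2) d c :=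
    fun d => blockDiagonal'_apply_eq _ _ _ _
  simp only [hJ, jordanBlock, Matrix.of_apply]
  by_cases hc : 0 < (c : ℕ)
  · set c' : Fin (r p.1 p.2) := ⟨(c : ℕ) - 1, Nat.lt_of_le_of_lt (Nat.sub_le _ _) c.isLt⟩ with hc'
    have hcv : (c' : ℕ) = (c : ℕ) - 1 := rfl
    have hne : c' ≠ c := by rw [Ne, Fin.ext_iff, hcv]; omega
    have hterm : ∀ d : Fin (r p.1 p.2),
        w ⟨p, d⟩ * (if (c : ℕ) = (d : ℕ) then lam p.1 else if (c : ℕ) = (d : ℕ) + 1 then 1 else 0)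
        = (if d = c then lam p.1 * w ⟨p, c⟩ else 0) + (if d = c' then w ⟨p, c'⟩ else 0) := by
      intro d
      by_cases h1 : d = c
      · subst h1
        rw [if_pos rfl, if_pos rfl, if_neg (fun h => hne h.symm)]
        ring
      · by_cases h2 : d = c'
        · subst h2
          rw [if_neg (by rw [hcv]; omega), if_pos (by rw [hcv]; omega), if_neg hne, if_pos rfl]
          ring
        · rw [Fin.ext_iff] at h1 h2; rw [hcv] at h2
          rw [if_neg (by omega), if_neg (by omega),
            if_neg (by rw [Fin.ext_iff]; omega), if_neg (by rw [Fin.ext_iff, hcv]; omega)]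
          ring
    rw [Finset.sum_congr rfl (fun d _ => hterm d), Finset.sum_add_distrib,
      Finset.sum_ite_eq' Finset.univ c, Finset.sum_ite_eq' Finset.univ c']
    simp [hc]
  · have hterm : ∀ d : Fin (r p.1 p.2),
        w ⟨p, d⟩ * (if (c : ℕ) = (d : ℕ) then lam p.1 else if (c : ℕ) = (d : ℕ) + 1 then 1 else 0)
        = (if d = c then lam p.1 * w ⟨p, c⟩ else 0) := by
      intro d
      by_cases h1 : d = c
      · subst h1; rw [if_pos rfl, if_pos rfl]; ring
      · rw [if_neg h1, if_neg (by rw [Fin.ext_iff] at h1; omega), if_neg (by omega)]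
        ring
    rw [Finset.sum_congr rfl (fun d _ => hterm d), Finset.sum_ite_eq' Finset.univ c]
    simp [hc]

section jfac

variable {ι : Type} [Fintype ι] [DecidableEq ι]

def jfac (J : Matrix ι ι ℝ) : List ℝ → Matrix ι ι ℝ
  | [] => 1
  | μ :: L => jfac J L * (J - μ • 1)

lemma jfac_nil (J : Matrix ι ι ℝ) : jfac J [] = 1 := rfl
lemma jfac_cons (J : Matrix ι ι ℝ) (μ : ℝ) (L : List ℝ) :
    jfac J (μ :: L) = jfac J L * (J - μ • 1) := rfl

lemma jfac_append (J : Matrix ι ι ℝ) (L₁ L₂ : List ℝ) :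
    jfac J (L₁ ++ L₂) = jfac J L₂ * jfac J L₁ := by
  induction L₁ with
  | nil => simp [jfac_nil]
  | cons μ L ih => rw [List.cons_append, jfac_cons, jfac_cons, ih, mul_assoc]

lemma jfac_replicate (J : Matrix ι ι ℝ) (μ : ℝ) (n : ℕ) :
    jfac J (List.replicate n μ) = (J - μ • 1) ^ n := by
  induction n with
  | zero => simp [jfac_nil]
  | succ n ih => rw [List.replicate_succ, jfac_cons, ih, ← pow_succ]

lemma vecMul_smul_one (v : ι → ℝ) (μ : ℝ) : v ᵥ* (μ • (1 : Matrix ι ι ℝ)) = μ • v := by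
  ext i
  simp [vecMul, dotProduct, Matrix.one_apply, mul_ite, Finset.sum_ite_eq, mul_comm]

lemma vecMul_sub_smul_one (v : ι → ℝ) (J : Matrix ι ι ℝ) (μ : ℝ) :
    v ᵥ* (J - μ • 1) = v ᵥ* J - μ • v := by
  rw [Matrix.vecMul_sub, vecMul_smul_one]

lemma jfac_mem (J : Matrix ι ι ℝ) (W : Submodule ℝ (ι → ℝ))
    (hW : ∀ v ∈ W, v ᵥ* J ∈ W) (L : List ℝ) {v : ι → ℝ} (hv : v ∈ W) :
    v ᵥ* jfac J L ∈ W := by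
  induction L with
  | nil => rw [jfac_nil, Matrix.vecMul_one]; exact hv
  | cons μ L ih =>
    rw [jfac_cons, ← Matrix.vecMul_vecMul, vecMul_sub_smul_one]
    exact W.sub_mem (hW _ ih) (W.smul_mem μ ih)

lemma exists_eig (J : Matrix ι ι ℝ) (W : Submodule ℝ (ι → ℝ))
    (hW : ∀ v ∈ W, v ᵥ* J ∈ W) :
    ∀ (L : List ℝ) (v : ι → ℝ), v ∈ W → v ≠ 0 → v ᵥ* jfac J L = 0 →
      ∃ μ ∈ L, ∃ w ∈ W, w ≠ 0 ∧ w ᵥ* J = μ • w := by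
  intro L
  induction L with
  | nil =>
    intro v _ hv h
    rw [jfac_nil, Matrix.vecMul_one] at h
    exact absurd h hv
  | cons μ L ih =>
    intro v hvW hv h
    rw [jfac_cons, ← Matrix.vecMul_vecMul] at h
    set u := v ᵥ* jfac J L with hu
    by_cases hu0 : u = 0
    · obtain ⟨μ', hμ', hw⟩ := ih v hvW hv hu0
      exact ⟨μ', List.mem_cons_of_mem _ hμ', hw⟩
    · refine ⟨μ, List.mem_cons_self, u, jfac_mem J W hW L hvW, hu0, ?_⟩
      rw [vecMul_sub_smul_one] at h
      linear_combination (norm := module) h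

end jfac



lemma jordanMatrix_sub_smul_one (lam : Fin l → ℝ) (μ : ℝ) :
    jordanMatrix l lam α r - μ • 1 =
      blockDiagonal' (fun p : (i : Fin l) × Fin (α i) =>
        jordanBlock (lam p.1) (r p.1 p.2) - μ • 1) := by
  have h1 : (1 : Matrix (JIdx l α r) (JIdx l α r) ℝ) =
      blockDiagonal' (fun p : (i : Fin l) × Fin (α i) => (1 : Matrix (Fin (r p.1 p.2)) (Fin (r p.1 p.2)) ℝ)) :=
    (blockDiagonal'_one).symm
  rw [jordanMatrix, h1, ← blockDiagonal'_smul, ← blockDiagonal'_sub]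
  rfl

lemma jfac_blockDiagonal (lam : Fin l → ℝ) (L : List ℝ) :
    jfac (jordanMatrix l lam α r) L =
      blockDiagonal' (fun p : (i : Fin l) × Fin (α i) =>
        jfac (jordanBlock (lam p.1) (r p.1 p.2)) L) := by
  induction L with
  | nil =>
    rw [jfac_nil, ← blockDiagonal'_one]
    rfl
  | cons μ L ih =>
    rw [jfac_cons, ih, jordanMatrix_sub_smul_one, ← blockDiagonal'_mul]
    rfl

lemma r_le_card (p : (i : Fin l) × Fin (α i)) :
    r p.1 p.2 ≤ Fintype.card (JIdx l α r) := by
  have := Fintype.card_le_of_injective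
    (@Sigma.mk ((i : Fin l) × Fin (α i)) (fun p => Fin (r p.1 p.2)) p)
    sigma_mk_injective
  simpa using this

lemma jfac_big_eq_zero (lam : Fin l → ℝ) :
    jfac (jordanMatrix l lam α r)
      ((List.finRange l).flatMap fun i => List.replicate (Fintype.card (JIdx l α r)) (lam i)) = 0 := by
  rw [jfac_blockDiagonal]
  have : (fun p : (i : Fin l) × Fin (α i) =>
      jfac (jordanBlock (lam p.1) (r p.1 p.2))
        ((List.finRange l).flatMap fun i => List.replicate (Fintype.card (JIdx l α r)) (lam i)))
      = fun _ => 0 := by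
    funext p
    obtain ⟨s, t, hst⟩ := List.append_of_mem (List.mem_finRange p.1)
    rw [hst, List.flatMap_append, List.flatMap_cons, jfac_append, jfac_append,
      jfac_replicate, jordanBlock_sub_pow_eq_zero _ _ (r_le_card p), mul_zero, zero_mul]
  rw [this]
  ext ⟨p, a⟩ ⟨q, b⟩
  rw [blockDiagonal'_apply]
  split_ifs <;> simp

section ctrl

variable {ι : Type} [Fintype ι] [DecidableEq ι] {m : ℕ}

lemma vecMul_sum_mat {γ : Type*} (s : Finset γ) (M : γ → Matrix ι (Fin m) ℝ) (v : ι → ℝ) :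
    v ᵥ* (∑ i ∈ s, M i) = ∑ i ∈ s, v ᵥ* M i := by
  ext c
  simp only [vecMul, dotProduct, Matrix.sum_apply, Finset.mul_sum, Finset.sum_apply]
  exact Finset.sum_comm

lemma vecMul_smul_mat (c : ℝ) (M : Matrix ι (Fin m) ℝ) (v : ι → ℝ) :
    v ᵥ* (c • M) = c • (v ᵥ* M) := by
  ext i
  simp [vecMul, dotProduct, Finset.mul_sum, mul_left_comm]

lemma vecMul_pow_extend [Nonempty ι]
    (J : Matrix ι ι ℝ) (B : Matrix ι (Fin m) ℝ) (v : ι → ℝ)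
    (h : ∀ j < Fintype.card ι, v ᵥ* (J ^ j * B) = 0) : ∀ j, v ᵥ* (J ^ j * B) = 0 := by
  intro j
  have hn : 0 < Fintype.card ι := Fintype.card_pos
  have hmono := Matrix.charpoly_monic J
  have hdeg : ((Polynomial.X ^ j) %ₘ (Matrix.charpoly J)).natDegree < Fintype.card ι := by
    rcases eq_or_ne ((Polynomial.X ^ j) %ₘ (Matrix.charpoly J)) 0 with h0 | h0
    · simpa [h0] using hn
    · rw [Polynomial.natDegree_lt_iff_degree_lt h0]
      have h1 := Polynomial.degree_modByMonic_lt (Polynomial.X ^ j) hmono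
      rwa [Matrix.charpoly_degree_eq_dim] at h1
  have hJ : J ^ j = Polynomial.aeval J ((Polynomial.X ^ j) %ₘ (Matrix.charpoly J)) := by
    have h2 := congrArg (Polynomial.aeval J)
      (Polynomial.modByMonic_add_div (Polynomial.X ^ j) (Matrix.charpoly J))
    rw [_root_.map_add, _root_.map_mul, Matrix.aeval_self_charpoly, zero_mul, add_zero] at h2
    rw [h2, map_pow, Polynomial.aeval_X]
  rw [Polynomial.aeval_eq_sum_range' hdeg] at hJ
  rw [hJ, Matrix.sum_mul]
  have : ∀ i ∈ Finset.range (Fintype.card ι), (((Polynomial.X ^ j %ₘ Matrix.charpoly J).coeff i) • J ^ i) * B = ((Polynomial.X ^ j %ₘ Matrix.charpoly J).coeff i) • (J ^ i * B) :=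
    fun i _ => Matrix.smul_mul _ _ _
  rw [Finset.sum_congr rfl this, vecMul_sum_mat]
  apply Finset.sum_eq_zero
  intro i hi
  rw [vecMul_smul_mat, h i (Finset.mem_range.mp hi), smul_zero]

lemma ctrl_top_iff (J : Matrix ι ι ℝ) (B : Matrix ι (Fin m) ℝ) :
    ctrlSubspace J B = ⊤ ↔ ∀ v : ι → ℝ, (∀ j : ℕ, v ᵥ* (J ^ j * B) = 0) → v = 0 := by
  rcases isEmpty_or_nonempty ι with hι | hι
  · constructor
    · intro _ v _
      funext i; exact (hι.false i).elim
    · intro _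
      rw [eq_top_iff]
      intro x _
      have hx : x = 0 := funext fun i => (hι.false i).elim
      rw [hx]; exact Submodule.zero_mem _
  constructor
  · intro htop v hv
    let φ : (ι → ℝ) →ₗ[ℝ] ℝ :=
      { toFun := fun x => v ⬝ᵥ x
        map_add' := fun a b => dotProduct_add v a b
        map_smul' := fun c a => by simp [dotProduct_smul] }
    have hle : ctrlSubspace J B ≤ LinearMap.ker φ := by
      rw [ctrlSubspace]
      apply iSup₂_le
      intro j hj
      rintro x ⟨u, rfl⟩
      show v ⬝ᵥ ((J ^ j * B).mulVec u) = 0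
      rw [dotProduct_mulVec, hv j, zero_dotProduct]
    have hv0 : φ v = 0 := hle (htop ▸ Submodule.mem_top)
    exact dotProduct_self_eq_zero.mp hv0
  · intro h
    by_contra hne
    obtain ⟨φ, hφ0, hφ⟩ := Submodule.exists_dual_map_eq_bot_of_lt_top
      (lt_top_iff_ne_top.mpr hne) inferInstance
    set v : ι → ℝ := fun i => φ (fun j => if i = j then 1 else 0) with hv
    have hφx : ∀ x, φ x = v ⬝ᵥ x := by
      intro x
      rw [LinearMap.pi_apply_eq_sum_univ φ x]
      simp only [dotProduct, hv, smul_eq_mul]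
      exact Finset.sum_congr rfl fun i _ => mul_comm _ _
    have hvne : v ≠ 0 := by
      intro h0
      apply hφ0
      apply LinearMap.ext
      intro x
      rw [hφx, h0, zero_dotProduct, LinearMap.zero_apply]
    have hvlt : ∀ j < Fintype.card ι, v ᵥ* (J ^ j * B) = 0 := by
      intro j hj
      funext c
      have hcol : (J ^ j * B).mulVec (Pi.single c 1) ∈ ctrlSubspace J B := by
        apply Submodule.mem_iSup_of_mem j
        apply Submodule.mem_iSup_of_mem (Finset.mem_range.mpr hj)
        exact LinearMap.mem_range_self _ _
      have hmem : φ ((J ^ j * B).mulVec (Pi.single c 1)) ∈ Submodule.map φ (ctrlSubspace J B) :=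
        Submodule.mem_map_of_mem hcol
      rw [hφ] at hmem
      have hz : φ ((J ^ j * B).mulVec (Pi.single c 1)) = 0 := by simpa using hmem
      rw [hφx, dotProduct_mulVec] at hz
      simpa using hz
    exact hvne (h v (vecMul_pow_extend J B v hvlt))

end ctrl

lemma eig_blocks_vanish {μ : ℝ} {w : JIdx l α r → ℝ}
    (hw : w ᵥ* jordanMatrix l lam α r = μ • w)
    (p : (i : Fin l) × Fin (α i)) (hp : lam p.1 ≠ μ) (c : Fin (r p.1 p.2)) :
    w ⟨p, c⟩ = 0 := by
  suffices H : ∀ t (c : Fin (r p.1 p.2)), (c : ℕ) = t → w ⟨p, c⟩ = 0 from H _ c rfl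
  clear c
  intro t
  induction t using Nat.strong_induction_on with
  | _ t ih =>
  intro c hc
  subst hc
  have heq := congrFun hw ⟨p, c⟩
  rw [vecMul_jordanMatrix_apply] at heq
  simp only [Pi.smul_apply, smul_eq_mul] at heq
  have hsub : lam p.1 - μ ≠ 0 := sub_ne_zero.mpr hp
  by_cases hc : 0 < (c : ℕ)
  · rw [dif_pos hc] at heq
    have hprev : w ⟨p, ⟨(c : ℕ) - 1, Nat.lt_of_le_of_lt (Nat.sub_le _ _) c.isLt⟩⟩ = 0 :=
      ih ((c : ℕ) - 1) (by omega) _ rfl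
    rw [hprev, add_zero] at heq
    have : (lam p.1 - μ) * w ⟨p, c⟩ = 0 := by linarith
    exact (mul_eq_zero.mp this).resolve_left hsub
  · rw [dif_neg hc, add_zero] at heq
    have : (lam p.1 - μ) * w ⟨p, c⟩ = 0 := by linarith
    exact (mul_eq_zero.mp this).resolve_left hsub

lemma eig_low_vanish {μ : ℝ} {w : JIdx l α r → ℝ}
    (hw : w ᵥ* jordanMatrix l lam α r = μ • w)
    (p : (i : Fin l) × Fin (α i)) (c : Fin (r p.1 p.2)) (hc : (c : ℕ) < r p.1 p.2 - 1) :
    w ⟨p, c⟩ = 0 := by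
  by_cases hp : lam p.1 = μ
  · have hlt : (c : ℕ) + 1 < r p.1 p.2 := by omega
    have heq := congrFun hw ⟨p, ⟨(c : ℕ) + 1, hlt⟩⟩
    rw [vecMul_jordanMatrix_apply] at heq
    simp only [Pi.smul_apply, smul_eq_mul] at heq
    rw [dif_pos (by simp)] at heq
    have hfin : (⟨(c : ℕ) + 1 - 1, Nat.lt_of_le_of_lt (Nat.sub_le _ _) hlt⟩ : Fin (r p.1 p.2)) = c := by
      simp [Fin.ext_iff]
    rw [hfin, hp] at heq
    linarith
  · exact eig_blocks_vanish hw p hp c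

lemma vecMul_eig (i : Fin l) (w : JIdx l α r → ℝ)
    (h1 : ∀ x : JIdx l α r, x.1.1 ≠ i → w x = 0)
    (h2 : ∀ x : JIdx l α r, (x.2 : ℕ) < r x.1.1 x.1.2 - 1 → w x = 0) :
    w ᵥ* jordanMatrix l lam α r = lam i • w := by
  funext x
  obtain ⟨p, c⟩ := x
  rw [vecMul_jordanMatrix_apply]
  simp only [Pi.smul_apply, smul_eq_mul]
  have hd : (if h : 0 < (c : ℕ) then
      w ⟨p, ⟨(c : ℕ) - 1, Nat.lt_of_le_of_lt (Nat.sub_le _ _) c.isLt⟩⟩ else 0) = 0 := by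
    by_cases hc : 0 < (c : ℕ)
    · rw [dif_pos hc]
      exact h2 ⟨p, ⟨(c : ℕ) - 1, Nat.lt_of_le_of_lt (Nat.sub_le _ _) c.isLt⟩⟩ (by
        have := c.isLt; simp only []; omega)
    · rw [dif_neg hc]
  rw [hd, add_zero]
  by_cases hp : p.1 = i
  · rw [hp]
  · rw [h1 ⟨p, c⟩ hp, mul_zero, mul_zero]

lemma vecMul_B (hr : ∀ i k, 0 < r i k) (Bhat : Matrix (JIdx l α r) (Fin m) ℝ)
    (i : Fin l) (w : JIdx l α r → ℝ)
    (h1 : ∀ x : JIdx l α r, x.1.1 ≠ i → w x = 0)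
    (h2 : ∀ x : JIdx l α r, (x.2 : ℕ) < r x.1.1 x.1.2 - 1 → w x = 0) :
    w ᵥ* Bhat = ∑ k : Fin (α i),
      w ⟨⟨i, k⟩, ⟨r i k - 1, Nat.sub_lt (hr i k) Nat.one_pos⟩⟩ • lastRow hr Bhat i k := by
  funext c
  have hsum : (w ᵥ* Bhat) c = ∑ y : JIdx l α r, w y * Bhat y c := rfl
  rw [hsum, ← Finset.univ_sigma_univ, Finset.sum_sigma]
  have hout : ∀ p : (i' : Fin l) × Fin (α i'), p.1 ≠ i →
      ∑ d : Fin (r p.1 p.2), w ⟨p, d⟩ * Bhat ⟨p, d⟩ c = 0 := by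
    intro p hp
    apply Finset.sum_eq_zero
    intro d _
    rw [h1 ⟨p, d⟩ hp, zero_mul]
  -- sum over p : Σ i', Fin (α i')  =  sum over i' and k
  rw [show (Finset.univ : Finset ((i' : Fin l) × Fin (α i'))) = Finset.univ.sigma fun _ => Finset.univ from rfl]
  rw [Finset.sum_sigma]
  rw [Finset.sum_eq_single i]
  rotate_left
  · intro i' _ hi'
    apply Finset.sum_eq_zero
    intro k _
    exact hout ⟨i', k⟩ hi'
  · intro h; exact absurd (Finset.mem_univ i) h
  simp only [Finset.sum_apply, Pi.smul_apply, smul_eq_mul]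
  apply Finset.sum_congr rfl
  intro k _
  rw [Finset.sum_eq_single (⟨r i k - 1, Nat.sub_lt (hr i k) Nat.one_pos⟩ : Fin (r i k))]
  · rfl
  · intro d _ hd
    have hdv : (d : ℕ) ≠ r i k - 1 := by
      intro h; exact hd (Fin.ext h)
    rw [h2 ⟨⟨i, k⟩, d⟩ (by have := d.isLt; simp only []; omega), zero_mul]
  · intro h; exact absurd (Finset.mem_univ _) h

end Stmt0Aux

/-- For `J` in Jordan normal form with distinct real eigenvalues,
the pair `(J, B̂)` is completely controllable iff for every eigenvalue the rows of
`B̂` aligned with the last rows of its Jordan blocks are linearly independent. -/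
theorem stmt0 (l m : ℕ) (lam : Fin l → ℝ) (hlam : Function.Injective lam)
    (α : Fin l → ℕ) (r : (i : Fin l) → Fin (α i) → ℕ) (hr : ∀ i k, 0 < r i k)
    (Bhat : Matrix (JIdx l α r) (Fin m) ℝ) :
    ctrlSubspace (jordanMatrix l lam α r) Bhat = ⊤ ↔
      ∀ i : Fin l, LinearIndependent ℝ (fun k : Fin (α i) => lastRow hr Bhat i k) := by
  classical
  set J := jordanMatrix l lam α r with hJdef
  rw [ctrl_top_iff]
  constructor
  · -- controllable → linear independence of the last rows
    intro hctrl i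
    by_contra hdep
    obtain ⟨g, hg0, k0, hk0⟩ := Fintype.not_linearIndependent_iff.mp hdep
    set w : JIdx l α r → ℝ := fun x => ∑ k : Fin (α i),
      g k * (if x = (⟨⟨i, k⟩, ⟨r i k - 1, Nat.sub_lt (hr i k) Nat.one_pos⟩⟩ : JIdx l α r)
        then 1 else 0) with hwdef
    have hwz : ∀ k : Fin (α i),
        w (⟨⟨i, k⟩, ⟨r i k - 1, Nat.sub_lt (hr i k) Nat.one_pos⟩⟩ : JIdx l α r) = g k := by
      intro k
      simp only [hwdef]
      rw [Finset.sum_eq_single k]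
      · rw [if_pos rfl, mul_one]
      · intro k' _ hk'
        rw [if_neg, mul_zero]
        intro h
        have h1 := congrArg Sigma.fst h
        exact hk' (sigma_mk_injective h1).symm
      · intro h; exact absurd (Finset.mem_univ _) h
    have h1 : ∀ x : JIdx l α r, x.1.1 ≠ i → w x = 0 := by
      intro x hx
      simp only [hwdef]
      apply Finset.sum_eq_zero
      intro k _
      rw [if_neg, mul_zero]
      intro h
      exact hx (by rw [h])
    have h2 : ∀ x : JIdx l α r, (x.2 : ℕ) < r x.1.1 x.1.2 - 1 → w x = 0 := by
      intro x hx
      simp only [hwdef]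
      apply Finset.sum_eq_zero
      intro k _
      rw [if_neg, mul_zero]
      intro h
      rw [h] at hx
      simp only [] at hx
      omega
    have hw0 : w ≠ 0 := by
      intro h
      apply hk0
      rw [← hwz k0, h]
      rfl
    have heig : w ᵥ* J = lam i • w := vecMul_eig i w h1 h2
    have hB : w ᵥ* Bhat = 0 := by
      rw [vecMul_B hr Bhat i w h1 h2]
      rw [Finset.sum_congr rfl (fun k _ => by rw [hwz k])]
      exact hg0
    have hwj : ∀ j : ℕ, w ᵥ* (J ^ j) = (lam i ^ j) • w := by
      intro j
      induction j with
      | zero => simp [Matrix.vecMul_one]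
      | succ j ih =>
        rw [pow_succ, ← Matrix.vecMul_vecMul, ih, Matrix.smul_vecMul, heig, smul_smul,
          ← pow_succ]
    have hpow : ∀ j : ℕ, w ᵥ* (J ^ j * Bhat) = 0 := by
      intro j
      rw [← Matrix.vecMul_vecMul, hwj j, Matrix.smul_vecMul, hB, smul_zero]
    exact hw0 (hctrl w hpow)
  · -- linear independence of the last rows → controllable
    intro hind v hv
    by_contra hv0
    set W : Submodule ℝ (JIdx l α r → ℝ) :=
      { carrier := {u | ∀ j : ℕ, u ᵥ* (J ^ j * Bhat) = 0}
        add_mem' := by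
          intro a b ha hb j
          rw [Matrix.add_vecMul, ha j, hb j, add_zero]
        zero_mem' := fun j => Matrix.zero_vecMul _
        smul_mem' := by
          intro c a ha j
          rw [Matrix.smul_vecMul, ha j, smul_zero] } with hWdef
    have hWcl : ∀ u ∈ W, u ᵥ* J ∈ W := by
      intro u hu j
      rw [Matrix.vecMul_vecMul]
      have hmm : J * (J ^ j * Bhat) = J ^ (j + 1) * Bhat := by
        rw [← Matrix.mul_assoc, ← pow_succ']
      rw [hmm]
      exact hu (j + 1)
    have hvW : v ∈ W := hv
    have hjf : v ᵥ* jfac J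
        ((List.finRange l).flatMap fun i => List.replicate (Fintype.card (JIdx l α r)) (lam i))
        = 0 := by
      rw [hJdef, jfac_big_eq_zero, Matrix.vecMul_zero]
    obtain ⟨μ, hμL, w, hwW, hw0, hweig⟩ := exists_eig J W hWcl _ v hvW hv0 hjf
    obtain ⟨i, -, hμ⟩ := List.mem_flatMap.mp hμL
    have hμi : μ = lam i := List.eq_of_mem_replicate hμ
    subst hμi
    have h1 : ∀ x : JIdx l α r, x.1.1 ≠ i → w x = 0 := by
      intro x hx
      obtain ⟨p, c⟩ := x
      exact eig_blocks_vanish hweig p (fun h => hx (hlam h)) c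
    have h2 : ∀ x : JIdx l α r, (x.2 : ℕ) < r x.1.1 x.1.2 - 1 → w x = 0 := by
      intro x hx
      obtain ⟨p, c⟩ := x
      exact eig_low_vanish hweig p c hx
    have hB0 : w ᵥ* Bhat = 0 := by
      have h0 := hwW 0
      rwa [pow_zero, Matrix.one_mul] at h0
    rw [vecMul_B hr Bhat i w h1 h2] at hB0
    have hcoef := Fintype.linearIndependent_iff.mp (hind i) _ hB0
    apply hw0
    funext x
    obtain ⟨⟨i', k⟩, c⟩ := x
    show w ⟨⟨i', k⟩, c⟩ = 0
    by_cases hi' : i' = i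
    · subst hi'
      rcases lt_or_ge ((c : ℕ)) (r i' k - 1) with hc | hc
      · exact h2 ⟨⟨i', k⟩, c⟩ hc
      · have hcv : (c : ℕ) = r i' k - 1 := by
          have hlt : (c : ℕ) < r i' k := c.isLt
          omega
        have hceq : c = (⟨r i' k - 1, Nat.sub_lt (hr i' k) Nat.one_pos⟩ : Fin (r i' k)) :=
          Fin.ext hcv
        rw [hceq]
        exact hcoef k
    · exact h1 ⟨⟨i', k⟩, c⟩ hi'
end

section
/- Let J ∈ ℝ^{n×n} be in Jordan normal form with distinct real eigenvalues λ_1,…,λ_l, where λ_i has α_i Jordan blocks of sizes r_{i1},…,r_{iα_i}. Define B̂ ∈ ℝ^{n×m} as follows: every row of B̂ not aligned with the last row of a Jordan block is zero; for each i, if α_i ≥ m, choose indices β_{i1},…,β_{im} of blocks of λ_i whose sizes are the m largest (r_{iβ_{i1}} ≥ r_{iβ_{i2}} ≥ … are the m largest among r_{i1},…,r_{iα_i}) and set b_{r i β_{ij}} equal to the j-th standard basis row vector of ℝ^m for j = 1,…,m, all other last-row blocks of λ_i being zero; if α_i < m, set b_{rik} equal to the k-th standard basis row vector of ℝ^m for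 k = 1,…,α_i. Then this B̂ maximizes the dimension of the controllable subspace of (J, ·) over all matrices in ℝ^{n×m}. -/
open Matrix

namespace Stmt4Aux

variable {κ : Type} [Fintype κ] [DecidableEq κ]

abbrev BIdx (s : κ → ℕ) : Type := (k : κ) × Fin (s k)

noncomputable def bd (μ : κ → ℝ) (s : κ → ℕ) : (BIdx s → ℝ) →ₗ[ℝ] (BIdx s → ℝ) :=
  (Matrix.blockDiagonal' fun k => jordanBlock (μ k) (s k)).mulVecLin

lemma bd_apply (μ : κ → ℝ) (s : κ → ℕ) (v : BIdx s → ℝ) (k : κ) (x : Fin (s k)) :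
    bd μ s v ⟨k, x⟩ = μ k * v ⟨k, x⟩ +
      (if h : (x : ℕ) + 1 < s k then v ⟨k, ⟨(x : ℕ) + 1, h⟩⟩ else 0) := by
  classical
  have h1 : bd μ s v ⟨k, x⟩ = ∑ k' : κ, ∑ x' : Fin (s k'),
      (Matrix.blockDiagonal' fun k0 => jordanBlock (μ k0) (s k0)) ⟨k, x⟩ ⟨k', x'⟩ * v ⟨k', x'⟩ := by
    simp only [bd, Matrix.mulVecLin_apply, Matrix.mulVec, dotProduct]
    have h0 := Finset.sum_sigma (Finset.univ : Finset κ)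
      (fun k' => (Finset.univ : Finset (Fin (s k'))))
      (fun q => (Matrix.blockDiagonal' fun k0 => jordanBlock (μ k0) (s k0)) ⟨k, x⟩ q * v q)
    rw [Finset.univ_sigma_univ] at h0
    exact h0
  rw [h1, Finset.sum_eq_single k]
  · have h2 : ∀ x' : Fin (s k),
        (Matrix.blockDiagonal' fun k0 => jordanBlock (μ k0) (s k0)) ⟨k, x⟩ ⟨k, x'⟩
          = jordanBlock (μ k) (s k) x x' := by
      intro x'; simp [Matrix.blockDiagonal'_apply]
    simp only [h2]
    have h3 : ∀ x' : Fin (s k), jordanBlock (μ k) (s k) x x' * v ⟨k, x'⟩ =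
        μ k * ((if x' = x then (1:ℝ) else 0) * v ⟨k, x'⟩)
        + (if (x' : ℕ) = (x : ℕ) + 1 then (1:ℝ) else 0) * v ⟨k, x'⟩ := by
      intro x'
      by_cases hx : (x' : ℕ) = (x : ℕ)
      · have : x' = x := Fin.ext hx
        subst this
        simp [jordanBlock]
      · have hxx : ¬ x' = x := fun h => hx (by rw [h])
        simp [jordanBlock, hx, hxx]
    rw [Finset.sum_congr rfl fun x' _ => h3 x']
    rw [Finset.sum_add_distrib, ← Finset.mul_sum]
    congr 1
    · simp only [ite_mul, one_mul, zero_mul]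
      rw [Finset.sum_ite_eq' Finset.univ x (fun x' => v ⟨k, x'⟩)]
      simp
    · by_cases h : (x : ℕ) + 1 < s k
      · rw [dif_pos h]
        have : ∀ x' : Fin (s k), ((x' : ℕ) = (x : ℕ) + 1) ↔ x' = ⟨(x:ℕ)+1, h⟩ := by
          intro x'; constructor
          · intro hh; exact Fin.ext hh
          · intro hh; rw [hh]
        simp only [this, ite_mul, one_mul, zero_mul]
        rw [Finset.sum_ite_eq' Finset.univ (⟨(x:ℕ)+1, h⟩ : Fin (s k)) (fun x' => v ⟨k, x'⟩)]
        simp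
      · rw [dif_neg h]
        apply Finset.sum_eq_zero
        intro x' _
        have : ¬ ((x' : ℕ) = (x : ℕ) + 1) := by
          intro hh; exact h (hh ▸ x'.isLt)
        simp [this]
  · intro k' _ hk'
    apply Finset.sum_eq_zero
    intro x' _
    have : (Matrix.blockDiagonal' fun k0 => jordanBlock (μ k0) (s k0)) ⟨k, x⟩ ⟨k', x'⟩ = 0 := by
      simp [Matrix.blockDiagonal'_apply, hk'.symm]
    simp [this]
  · intro h; exact absurd (Finset.mem_univ k) h


noncomputable def nu (μ : κ → ℝ) (s : κ → ℕ) (c : ℝ) : (BIdx s → ℝ) →ₗ[ℝ] (BIdx s → ℝ) :=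
  bd μ s - c • LinearMap.id

lemma nu_apply (μ : κ → ℝ) (s : κ → ℕ) (c : ℝ) (v : BIdx s → ℝ) (k : κ) (x : Fin (s k)) :
    nu μ s c v ⟨k, x⟩ = (μ k - c) * v ⟨k, x⟩ +
      (if h : (x : ℕ) + 1 < s k then v ⟨k, ⟨(x : ℕ) + 1, h⟩⟩ else 0) := by
  simp [nu, bd_apply, LinearMap.sub_apply]
  ring

lemma nu_pow_apply {μ : κ → ℝ} {s : κ → ℕ} {c : ℝ} {k : κ} (hk : μ k = c) (t : ℕ)
    (v : BIdx s → ℝ) (x : Fin (s k)) :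
    ((nu μ s c) ^ t) v ⟨k, x⟩ =
      if h : (x : ℕ) + t < s k then v ⟨k, ⟨(x : ℕ) + t, h⟩⟩ else 0 := by
  induction t generalizing v with
  | zero => simp
  | succ t ih =>
    rw [pow_succ]
    rw [Module.End.mul_apply, ih (nu μ s c v)]
    by_cases h : (x : ℕ) + t < s k
    · rw [dif_pos h, nu_apply, hk, sub_self, zero_mul, zero_add]
      by_cases h2 : (x : ℕ) + t + 1 < s k
      · rw [dif_pos h2, dif_pos (show (x:ℕ) + (t+1) < s k by omega)]
        congr 1
      · rw [dif_neg h2, dif_neg (by omega : ¬ ((x:ℕ) + (t+1) < s k))]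
    · rw [dif_neg h, dif_neg (by omega : ¬ ((x:ℕ) + (t+1) < s k))]

def blockSub (s : κ → ℕ) (k₀ : κ) : Submodule ℝ (BIdx s → ℝ) where
  carrier := {v | ∀ q : BIdx s, q.1 ≠ k₀ → v q = 0}
  add_mem' := fun ha hb q hq => by simp [ha q hq, hb q hq]
  zero_mem' := fun q hq => rfl
  smul_mem' := fun c v hv q hq => by simp [hv q hq]

lemma bd_mem_blockSub {μ : κ → ℝ} {s : κ → ℕ} {k₀ : κ} {v : BIdx s → ℝ}
    (hv : v ∈ blockSub s k₀) : bd μ s v ∈ blockSub s k₀ := by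
  rintro ⟨k, x⟩ hq
  rw [bd_apply]
  rw [hv ⟨k, x⟩ hq]
  by_cases h : (x : ℕ) + 1 < s k
  · rw [dif_pos h, hv ⟨k, ⟨(x:ℕ)+1, h⟩⟩ hq]; ring
  · rw [dif_neg h]; ring

lemma nu_mem_blockSub {μ : κ → ℝ} {s : κ → ℕ} {c : ℝ} {k₀ : κ} {v : BIdx s → ℝ}
    (hv : v ∈ blockSub s k₀) : nu μ s c v ∈ blockSub s k₀ := by
  have h1 : nu μ s c v = bd μ s v - c • v := by
    simp [nu, LinearMap.sub_apply]
  rw [h1]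
  exact sub_mem (bd_mem_blockSub hv) (Submodule.smul_mem _ _ hv)

lemma pow_mem_inv {M : Type*} [AddCommGroup M] [Module ℝ M] (f : M →ₗ[ℝ] M)
    (P : Submodule ℝ M) (hP : ∀ v ∈ P, f v ∈ P) (t : ℕ) :
    ∀ v ∈ P, (f ^ t) v ∈ P := by
  induction t with
  | zero => intro v hv; simpa using hv
  | succ t ih =>
    intro v hv
    rw [pow_succ, Module.End.mul_apply]
    exact ih _ (hP v hv)

lemma aeval_mem_inv {M : Type*} [AddCommGroup M] [Module ℝ M] (f : M →ₗ[ℝ] M)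
    (P : Submodule ℝ M) (hP : ∀ v ∈ P, f v ∈ P) (p : Polynomial ℝ) :
    ∀ v ∈ P, (Polynomial.aeval f p) v ∈ P := by
  intro v hv
  rw [Polynomial.aeval_eq_sum_range]
  rw [LinearMap.sum_apply]
  apply Submodule.sum_mem
  intro i _
  rw [LinearMap.smul_apply]
  exact Submodule.smul_mem _ _ (pow_mem_inv f P hP i v hv)

lemma nu_pow_kill {μ : κ → ℝ} {s : κ → ℕ} {k₀ : κ} {v : BIdx s → ℝ}
    (hv : v ∈ blockSub s k₀) (K : ℕ) (hK : s k₀ ≤ K) :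
    ((nu μ s (μ k₀)) ^ K) v = 0 := by
  funext q
  obtain ⟨k, x⟩ := q
  by_cases hk : k = k₀
  · subst hk
    rw [nu_pow_apply rfl, dif_neg (by omega)]
    rfl
  · exact pow_mem_inv _ _ (fun w hw => nu_mem_blockSub hw) K v hv ⟨k, x⟩ hk

lemma nu_pow_top {μ : κ → ℝ} {s : κ → ℕ} {c : ℝ} {k₀ : κ} (h0 : 0 < s k₀) (K : ℕ)
    (v : BIdx s → ℝ) :
    ((nu μ s c) ^ K) v ⟨k₀, ⟨s k₀ - 1, Nat.sub_lt h0 Nat.one_pos⟩⟩ =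
      (μ k₀ - c) ^ K * v ⟨k₀, ⟨s k₀ - 1, Nat.sub_lt h0 Nat.one_pos⟩⟩ := by
  induction K generalizing v with
  | zero => simp
  | succ K ih =>
    rw [pow_succ', Module.End.mul_apply, nu_apply,
      dif_neg (show ¬ (s k₀ - 1 + 1 < s k₀) by omega), ih v]
    ring


noncomputable def invtGen {M : Type*} [AddCommGroup M] [Module ℝ M]
    (f : M →ₗ[ℝ] M) (W : Submodule ℝ M) : Submodule ℝ M :=
  ⨆ j : ℕ, W.map (f ^ j)

variable {M : Type*} [AddCommGroup M] [Module ℝ M]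

lemma map_pow_le_invtGen (f : M →ₗ[ℝ] M) (W : Submodule ℝ M) (j : ℕ) :
    W.map (f ^ j) ≤ invtGen f W := le_iSup (fun j => W.map (f ^ j)) j

lemma le_invtGen (f : M →ₗ[ℝ] M) (W : Submodule ℝ M) : W ≤ invtGen f W := by
  have h := map_pow_le_invtGen f W 0
  rwa [pow_zero, Module.End.one_eq_id, Submodule.map_id] at h

lemma invtGen_invariant (f : M →ₗ[ℝ] M) (W : Submodule ℝ M) :
    Submodule.map f (invtGen f W) ≤ invtGen f W := by
  rw [invtGen, Submodule.map_iSup]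
  apply iSup_le
  intro j
  have h : Submodule.map f (W.map (f ^ j)) = W.map (f ^ (j + 1)) := by
    rw [pow_succ', ← Submodule.map_comp]
    rfl
  rw [h]
  exact map_pow_le_invtGen f W (j + 1)

lemma invtGen_mem_invariant (f : M →ₗ[ℝ] M) (W : Submodule ℝ M) {v : M}
    (hv : v ∈ invtGen f W) : f v ∈ invtGen f W :=
  invtGen_invariant f W (Submodule.mem_map_of_mem hv)

section Ctrl

variable {ι : Type} [Fintype ι] [DecidableEq ι] {m : ℕ}

lemma mulVecLin_pow (J : Matrix ι ι ℝ) (j : ℕ) :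
    (J ^ j).mulVecLin = J.mulVecLin ^ j := by
  induction j with
  | zero => rw [pow_zero, pow_zero, Matrix.mulVecLin_one, Module.End.one_eq_id]
  | succ j ih => rw [pow_succ, pow_succ, Matrix.mulVecLin_mul, ih]; rfl

lemma range_pow_mul (J : Matrix ι ι ℝ) (B : Matrix ι (Fin m) ℝ) (j : ℕ) :
    LinearMap.range ((J ^ j * B).mulVecLin) =
      Submodule.map (J.mulVecLin ^ j) (LinearMap.range B.mulVecLin) := by
  rw [Matrix.mulVecLin_mul, LinearMap.range_comp, mulVecLin_pow]

lemma ctrl_eq_invtGen (J : Matrix ι ι ℝ) (B : Matrix ι (Fin m) ℝ) :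
    ctrlSubspace J B = invtGen J.mulVecLin (LinearMap.range B.mulVecLin) := by
  apply le_antisymm
  · apply iSup₂_le
    intro j _
    rw [range_pow_mul]
    exact map_pow_le_invtGen _ _ j
  · apply iSup_le
    intro j
    rcases Nat.eq_zero_or_pos (Fintype.card ι) with hn | hn
    · intro v _
      have : Subsingleton (ι → ℝ) := by
        have : IsEmpty ι := Fintype.card_eq_zero_iff.mp hn
        infer_instance
      have hv0 : v = 0 := Subsingleton.elim v 0
      rw [hv0]
      exact Submodule.zero_mem _
    · set n := Fintype.card ι with hndef
      set q : Polynomial ℝ := Polynomial.X ^ j %ₘ J.charpoly with hq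
      have hdeg : q.natDegree < n := by
        rw [hq, hndef, ← Matrix.charpoly_natDegree_eq_dim J]
        apply Polynomial.natDegree_modByMonic_lt _ (Matrix.charpoly_monic J)
        intro h1
        have := Matrix.charpoly_natDegree_eq_dim J
        rw [h1] at this
        simp at this
        omega
      have hpow : J.mulVecLin ^ j = Polynomial.aeval J.mulVecLin q := by
        rw [← mulVecLin_pow, Matrix.pow_eq_aeval_mod_charpoly J j, ← hq]
        exact (Polynomial.aeval_algHom_apply (Matrix.toLinAlgEquiv' (R := ℝ) (n := ι)) J q).symm
      rintro v ⟨w, ⟨y, rfl⟩, rfl⟩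
      rw [hpow, Polynomial.aeval_eq_sum_range' hdeg, LinearMap.sum_apply]
      apply Submodule.sum_mem
      intro t ht
      rw [LinearMap.smul_apply]
      apply Submodule.smul_mem
      apply Submodule.mem_iSup_of_mem t
      apply Submodule.mem_iSup_of_mem (Finset.mem_range.mpr (Finset.mem_range.mp ht))
      rw [range_pow_mul]
      exact ⟨B.mulVecLin y, ⟨y, rfl⟩, rfl⟩

end Ctrl


section Rank

variable {V : Type*} [AddCommGroup V] [Module ℝ V] [FiniteDimensional ℝ V]

lemma finrank_map_add_inf_ker (f : V →ₗ[ℝ] V) (p : Submodule ℝ V) :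
    Module.finrank ℝ (p.map f) +
      Module.finrank ℝ (p ⊓ LinearMap.ker f : Submodule ℝ V) = Module.finrank ℝ p := by
  have h1 := LinearMap.finrank_range_add_finrank_ker (f.domRestrict p)
  rw [LinearMap.range_domRestrict] at h1
  have h2 : LinearMap.ker (f.domRestrict p) =
      Submodule.comap p.subtype (p ⊓ LinearMap.ker f) := by
    ext x
    simp [LinearMap.mem_ker, LinearMap.domRestrict_apply, x.2]
  rw [h2] at h1
  rw [← h1]
  congr 1
  exact (Submodule.comapSubtypeEquivOfLe inf_le_left).finrank_eq.symm

lemma finrank_eq_sum_layers (f : V →ₗ[ℝ] V) :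
    ∀ (K : ℕ) (C : Submodule ℝ V), C.map (f ^ K) = ⊥ →
      Module.finrank ℝ C = ∑ t ∈ Finset.range K,
        Module.finrank ℝ ((C.map (f ^ t)) ⊓ LinearMap.ker f : Submodule ℝ V) := by
  intro K
  induction K with
  | zero =>
    intro C hC
    rw [pow_zero, Module.End.one_eq_id, Submodule.map_id] at hC
    rw [hC]
    simp
  | succ K ih =>
    intro C hC
    have h2 : ∀ t : ℕ, (C.map f).map (f ^ t) = C.map (f ^ (t + 1)) := by
      intro t
      rw [pow_succ, Module.End.mul_eq_comp, Submodule.map_comp]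
    have ihC := ih (C.map f) (by rw [h2 K]; exact hC)
    rw [Finset.sum_range_succ']
    have h0 : C.map (f ^ 0) = C := by
      rw [pow_zero, Module.End.one_eq_id, Submodule.map_id]
    rw [h0]
    rw [← finrank_map_add_inf_ker f C]
    congr 1
    rw [ihC]
    apply Finset.sum_congr rfl
    intro t _
    rw [h2 t]

end Rank

lemma finrank_le_card_of_support {σ : Type} [Fintype σ] [DecidableEq σ]
    (P : Submodule ℝ (σ → ℝ)) (t : Finset σ)
    (h : ∀ v ∈ P, ∀ q ∉ t, v q = 0) : Module.finrank ℝ P ≤ t.card := by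
  classical
  let L : P →ₗ[ℝ] ({x // x ∈ t} → ℝ) :=
    (LinearMap.funLeft ℝ ℝ (fun q : {x // x ∈ t} => (q : σ))).comp P.subtype
  have hinj : Function.Injective L := by
    intro a b hab
    apply Subtype.ext
    funext q
    by_cases hq : q ∈ t
    · exact congrFun hab ⟨q, hq⟩
    · rw [h a.1 a.2 q hq, h b.1 b.2 q hq]
  have hle := LinearMap.finrank_le_finrank_of_injective hinj
  rwa [Module.finrank_fintype_fun_eq_card, Fintype.card_coe] at hle

lemma comb {κ : Type} [Fintype κ] [DecidableEq κ] (s : κ → ℕ) (m K : ℕ)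
    (hK : ∀ k, s k ≤ K)
    (S : Finset κ) (hS1 : min m (Fintype.card κ) ≤ S.card)
    (hS2 : ∀ k ∉ S, ∀ j ∈ S, s k ≤ s j) :
    ∑ t ∈ Finset.range K, min m (Finset.univ.filter fun k => t < s k).card
      ≤ ∑ k ∈ S, s k := by
  have hstep : ∀ t : ℕ, min m (Finset.univ.filter fun k => t < s k).card
      ≤ (S.filter fun k => t < s k).card := by
    intro t
    by_cases hall : ∀ j ∈ S, t < s j
    · rw [Finset.filter_true_of_mem hall]
      refine le_trans (min_le_min le_rfl ?_) hS1
      rw [← Finset.card_univ]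
      exact Finset.card_filter_le _ _
    · push_neg at hall
      obtain ⟨j, hjS, hj⟩ := hall
      have hsubset : Finset.univ.filter (fun k => t < s k) ⊆ S.filter (fun k => t < s k) := by
        intro k hk
        rw [Finset.mem_filter] at hk ⊢
        refine ⟨?_, hk.2⟩
        by_contra hkS
        have := hS2 k hkS j hjS
        omega
      exact le_trans (min_le_right _ _) (Finset.card_le_card hsubset)
  calc ∑ t ∈ Finset.range K, min m (Finset.univ.filter fun k => t < s k).card
      ≤ ∑ t ∈ Finset.range K, (S.filter fun k => t < s k).card :=
        Finset.sum_le_sum fun t _ => hstep t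
    _ = ∑ t ∈ Finset.range K, ∑ k ∈ S, if t < s k then 1 else 0 := by
        apply Finset.sum_congr rfl
        intro t _
        rw [Finset.card_filter]
    _ = ∑ k ∈ S, ∑ t ∈ Finset.range K, if t < s k then 1 else 0 := Finset.sum_comm
    _ = ∑ k ∈ S, s k := by
        apply Finset.sum_congr rfl
        intro k hk
        rw [← Finset.card_filter]
        have : (Finset.range K).filter (fun t => t < s k) = Finset.range (s k) := by
          ext t
          simp only [Finset.mem_filter, Finset.mem_range]
          constructor
          · intro ht; exact ht.2
          · intro ht; exact ⟨lt_of_lt_of_le ht (hK k), ht⟩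
        rw [this, Finset.card_range]


theorem upper_bound_eigen {κ : Type} [Fintype κ] [DecidableEq κ] (s : κ → ℕ) (c : ℝ) (m : ℕ)
    (W : Submodule ℝ (BIdx s → ℝ)) (hW : Module.finrank ℝ W ≤ m)
    (S : Finset κ) (hS1 : min m (Fintype.card κ) ≤ S.card)
    (hS2 : ∀ k ∉ S, ∀ j ∈ S, s k ≤ s j) :
    Module.finrank ℝ (invtGen (bd (fun _ => c) s) W) ≤ ∑ k ∈ S, s k := by
  classical
  set μ : κ → ℝ := fun _ => c with hμ
  set f := bd μ s with hf
  set ν := nu μ s c with hν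
  set C := invtGen f W with hC
  set K := Finset.univ.sup s with hKdef
  have hK : ∀ k, s k ≤ K := fun k => Finset.le_sup (Finset.mem_univ k)
  -- ν maps C into C
  have hCf : ∀ v ∈ C, f v ∈ C := fun v hv => invtGen_mem_invariant f W hv
  have hCν : ∀ v ∈ C, ν v ∈ C := by
    intro v hv
    have : ν v = f v - c • v := by simp [hν, nu, hf, LinearMap.sub_apply]
    rw [this]
    exact sub_mem (hCf v hv) (Submodule.smul_mem _ _ hv)
  have hCν_pow : ∀ t : ℕ, ∀ v ∈ C, (ν ^ t) v ∈ C := pow_mem_inv ν C hCν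
  -- map (ν ^ K) C = ⊥
  have hbot : C.map (ν ^ K) = ⊥ := by
    rw [Submodule.eq_bot_iff]
    rintro v ⟨u, _, rfl⟩
    funext q
    obtain ⟨k, x⟩ := q
    rw [hν, nu_pow_apply rfl, dif_neg (by have := hK k; omega)]
    rfl
  -- first layer bound: finrank (C ⊓ ker ν) ≤ m
  have hsup : C ≤ W ⊔ C.map ν := by
    rw [hC, invtGen]
    apply iSup_le
    intro j
    rintro v ⟨w, hw, rfl⟩
    have hcomm : Commute f (c • (1 : (BIdx s → ℝ) →ₗ[ℝ] (BIdx s → ℝ))) :=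
      (Commute.one_right f).smul_right c
    have hgeo := hcomm.mul_geom_sum₂ j
    have hν1 : f - c • (1 : (BIdx s → ℝ) →ₗ[ℝ] (BIdx s → ℝ)) = ν := by
      rw [hν, nu, hf]
      rfl
    have happ : (f ^ j) w = ((c • (1 : (BIdx s → ℝ) →ₗ[ℝ] (BIdx s → ℝ))) ^ j) w
        + ν ((∑ i ∈ Finset.range j, f ^ i * (c • (1 : (BIdx s → ℝ) →ₗ[ℝ] (BIdx s → ℝ))) ^ (j - 1 - i)) w) := by
      have : f ^ j = (c • (1 : (BIdx s → ℝ) →ₗ[ℝ] (BIdx s → ℝ))) ^ j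
          + ν * (∑ i ∈ Finset.range j, f ^ i * (c • (1 : (BIdx s → ℝ) →ₗ[ℝ] (BIdx s → ℝ))) ^ (j - 1 - i)) := by
        rw [← hν1, hgeo]
        abel
      rw [this]
      rfl
    rw [happ]
    apply Submodule.add_mem
    · apply Submodule.mem_sup_left
      rw [smul_pow, one_pow, LinearMap.smul_apply, Module.End.one_apply]
      exact Submodule.smul_mem _ _ hw
    · apply Submodule.mem_sup_right
      apply Submodule.mem_map_of_mem
      rw [LinearMap.sum_apply]
      apply Submodule.sum_mem
      intro i _
      rw [Module.End.mul_apply, smul_pow, one_pow, LinearMap.smul_apply, Module.End.one_apply,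
        LinearMap.map_smul]
      exact Submodule.smul_mem _ _ (map_pow_le_invtGen f W i ⟨w, hw, rfl⟩)
  have hlayer0 : Module.finrank ℝ (C ⊓ LinearMap.ker ν : Submodule ℝ _) ≤ m := by
    have h1 := finrank_map_add_inf_ker ν C
    have h2 := Submodule.finrank_sup_add_finrank_inf_eq W (C.map ν)
    have h3 : Module.finrank ℝ C ≤ Module.finrank ℝ (W ⊔ C.map ν : Submodule ℝ _) :=
      Submodule.finrank_mono hsup
    omega
  rw [finrank_eq_sum_layers ν K C hbot]
  refine le_trans (Finset.sum_le_sum (fun t _ => ?_)) (comb s m K hK S hS1 hS2)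
  apply le_min
  · refine le_trans (Submodule.finrank_mono (inf_le_inf_right _ ?_)) hlayer0
    rintro v ⟨u, hu, rfl⟩
    exact hCν_pow t u hu
  · set tset : Finset (BIdx s) :=
      Finset.univ.filter (fun q : BIdx s => (q.2 : ℕ) = 0 ∧ t < s q.1) with htset
    have hcard : tset.card = (Finset.univ.filter fun k => t < s k).card := by
      apply Finset.card_bij (fun q _ => q.1)
      · intro q hq
        rw [htset, Finset.mem_filter] at hq
        rw [Finset.mem_filter]
        exact ⟨Finset.mem_univ _, hq.2.2⟩
      · rintro ⟨k1, x1⟩ h1 ⟨k2, x2⟩ h2 heq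
        rw [htset, Finset.mem_filter] at h1 h2
        dsimp at heq
        subst heq
        have : x1 = x2 := Fin.ext (h1.2.1.trans h2.2.1.symm)
        rw [this]
      · intro k hk
        rw [Finset.mem_filter] at hk
        refine ⟨⟨k, ⟨0, by omega⟩⟩, ?_, rfl⟩
        rw [htset, Finset.mem_filter]
        exact ⟨Finset.mem_univ _, rfl, hk.2⟩
    rw [← hcard]
    apply finrank_le_card_of_support
    rintro v ⟨⟨u, hu, rfl⟩, hker⟩ q hq
    have hker' : ν ((ν ^ t) u) = 0 := hker
    obtain ⟨k, x⟩ := q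
    rw [htset, Finset.mem_filter] at hq
    push_neg at hq
    dsimp only at hq
    by_cases hx : (x : ℕ) = 0
    · have hst : s k ≤ t := hq (Finset.mem_univ _) hx
      rw [hν, nu_pow_apply rfl, dif_neg (show ¬ ((x : ℕ) + t < s k) by omega)]
    · have h0 : ((x : ℕ) - 1) + 1 < s k := by have := x.isLt; omega
      have heq := congrFun hker' ⟨k, ⟨(x : ℕ) - 1, by have := x.isLt; omega⟩⟩
      rw [hν, nu_apply, dif_pos h0] at heq
      have hμ0 : μ k - c = 0 := by rw [hμ]; exact sub_self c
      rw [hμ0, zero_mul, zero_add] at heq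
      have hxx : (⟨(x : ℕ) - 1 + 1, h0⟩ : Fin (s k)) = x :=
        Fin.ext (show (x : ℕ) - 1 + 1 = (x : ℕ) by omega)
      rw [hxx] at heq
      simpa using heq


lemma finrank_le_sum_proj {ι : Type} [Fintype ι] {V : Type*} [AddCommGroup V] [Module ℝ V]
    {Vi : ι → Type*} [∀ i, AddCommGroup (Vi i)] [∀ i, Module ℝ (Vi i)]
    [∀ i, FiniteDimensional ℝ (Vi i)]
    (π : ∀ i, V →ₗ[ℝ] Vi i) (hinj : ∀ v : V, (∀ i, π i v = 0) → v = 0)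
    (P : Submodule ℝ V) :
    Module.finrank ℝ P ≤ ∑ i, Module.finrank ℝ (P.map (π i)) := by
  classical
  let L : P →ₗ[ℝ] (∀ i, P.map (π i)) := LinearMap.pi
    (fun i => ((π i).comp P.subtype).codRestrict _
      (fun x => Submodule.mem_map_of_mem x.2))
  have hLinj : Function.Injective L := by
    intro a b hab
    apply Subtype.ext
    have h0 : ∀ i, π i (a.1 - b.1) = 0 := by
      intro i
      have := congrFun hab i
      have h1 : π i a.1 = π i b.1 := congrArg Subtype.val this
      rw [map_sub, h1, sub_self]
    have := hinj _ h0
    exact sub_eq_zero.mp this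
  have hle := LinearMap.finrank_le_finrank_of_injective hLinj
  rwa [Module.finrank_pi_fintype] at hle

section Global

variable {l : ℕ} (lam : Fin l → ℝ) (α : Fin l → ℕ) (r : (i : Fin l) → Fin (α i) → ℕ)

def emb (i : Fin l) : BIdx (r i) → JIdx l α r := fun q => ⟨⟨i, q.1⟩, q.2⟩

noncomputable def proj (i : Fin l) : (JIdx l α r → ℝ) →ₗ[ℝ] (BIdx (r i) → ℝ) :=
  LinearMap.funLeft ℝ ℝ (emb α r i)

lemma proj_comm (i : Fin l) :
    (proj α r i).comp (jordanMatrix l lam α r).mulVecLin =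
      (bd (fun _ => lam i) (r i)).comp (proj α r i) := by
  apply LinearMap.ext
  intro v
  funext q
  obtain ⟨k, x⟩ := q
  have hL : (jordanMatrix l lam α r).mulVecLin =
      bd (fun p : (i : Fin l) × Fin (α i) => lam p.1)
        (fun p : (i : Fin l) × Fin (α i) => r p.1 p.2) := rfl
  simp only [LinearMap.comp_apply, proj, LinearMap.funLeft_apply, emb, hL]
  rw [bd_apply, bd_apply]
  rfl

lemma proj_comm_pow (i : Fin l) (j : ℕ) :
    (proj α r i).comp ((jordanMatrix l lam α r).mulVecLin ^ j) =
      ((bd (fun _ => lam i) (r i)) ^ j).comp (proj α r i) := by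
  induction j with
  | zero =>
    rw [pow_zero, pow_zero, Module.End.one_eq_id]
    rfl
  | succ j ih =>
    rw [pow_succ', pow_succ']
    have : (proj α r i).comp ((jordanMatrix l lam α r).mulVecLin * ((jordanMatrix l lam α r).mulVecLin ^ j))
        = ((proj α r i).comp (jordanMatrix l lam α r).mulVecLin).comp ((jordanMatrix l lam α r).mulVecLin ^ j) := rfl
    rw [this, proj_comm lam α r i]
    apply LinearMap.ext
    intro v
    have := congrArg (fun g => (bd (fun _ => lam i) (r i)) (g v)) ih
    simpa using this

lemma proj_invtGen (i : Fin l) (W : Submodule ℝ (JIdx l α r → ℝ)) :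
    (invtGen (jordanMatrix l lam α r).mulVecLin W).map (proj α r i) =
      invtGen (bd (fun _ => lam i) (r i)) (W.map (proj α r i)) := by
  rw [invtGen, invtGen, Submodule.map_iSup]
  apply congrArg
  funext j
  rw [← Submodule.map_comp, proj_comm_pow lam α r i j, Submodule.map_comp]

theorem global_upper (m : ℕ)
    (S : (i : Fin l) → Finset (Fin (α i)))
    (hS1 : ∀ i, min m (α i) ≤ (S i).card)
    (hS2 : ∀ i, ∀ k ∉ S i, ∀ j ∈ S i, r i k ≤ r i j)
    (B : Matrix (JIdx l α r) (Fin m) ℝ) :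
    Module.finrank ℝ (ctrlSubspace (jordanMatrix l lam α r) B) ≤
      ∑ i, ∑ k ∈ S i, r i k := by
  classical
  rw [ctrl_eq_invtGen]
  have hinj : ∀ v : JIdx l α r → ℝ, (∀ i, proj α r i v = 0) → v = 0 := by
    intro v hv
    funext q
    obtain ⟨⟨i, k⟩, x⟩ := q
    have := congrFun (hv i) ⟨k, x⟩
    exact this
  refine le_trans (finrank_le_sum_proj (fun i => proj α r i) hinj _)
    (Finset.sum_le_sum fun i _ => ?_)
  rw [proj_invtGen]
  have hWi : Module.finrank ℝ ((LinearMap.range B.mulVecLin).map (proj α r i)) ≤ m := by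
    rw [← LinearMap.range_comp]
    refine le_trans (LinearMap.finrank_range_le _) ?_
    rw [Module.finrank_fintype_fun_eq_card, Fintype.card_fin]
  refine upper_bound_eigen (r i) (lam i) m _ hWi (S i) ?_ (hS2 i)
  rw [Fintype.card_fin]
  exact hS1 i

end Global


lemma single_mem_of_top {κ : Type} [Fintype κ] [DecidableEq κ] {s : κ → ℕ} {μ : κ → ℝ} {k₀ : κ}
    (P : Submodule ℝ (BIdx s → ℝ)) (hP : ∀ v ∈ P, nu μ s (μ k₀) v ∈ P)
    (w : BIdx s → ℝ) (hwP : w ∈ P) (hwB : w ∈ blockSub s k₀) (h0 : 0 < s k₀)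
    (htop : w ⟨k₀, ⟨s k₀ - 1, Nat.sub_lt h0 Nat.one_pos⟩⟩ ≠ 0) :
    ∀ x : Fin (s k₀), Pi.single (⟨k₀, x⟩ : BIdx s) (1 : ℝ) ∈ P := by
  classical
  set c := μ k₀ with hc
  set ν := nu μ s c with hν
  set cc := w ⟨k₀, ⟨s k₀ - 1, Nat.sub_lt h0 Nat.one_pos⟩⟩ with hcc
  have hsig : ∀ (a b : Fin (s k₀)), ((⟨k₀, a⟩ : BIdx s) = ⟨k₀, b⟩) ↔ a = b := by
    intro a b
    constructor
    · intro h
      exact eq_of_heq (Sigma.mk.inj_iff.mp h).2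
    · rintro rfl; rfl
  have main : ∀ n : ℕ, ∀ x : Fin (s k₀), (x : ℕ) = n →
      Pi.single (⟨k₀, x⟩ : BIdx s) (1 : ℝ) ∈ P := by
    intro n
    induction n using Nat.strong_induction_on with
    | _ n ih =>
      intro x hxn
      have hxlt : n < s k₀ := hxn ▸ x.isLt
      set t := s k₀ - 1 - n with ht
      have hz : (ν ^ t) w ∈ P := pow_mem_inv ν P hP t w hwP
      have hzB : (ν ^ t) w ∈ blockSub s k₀ :=
        pow_mem_inv ν (blockSub s k₀) (fun v hv => nu_mem_blockSub hv) t w hwB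
      have hzval : ∀ y : Fin (s k₀), (ν ^ t) w ⟨k₀, y⟩
          = if h : (y : ℕ) + t < s k₀ then w ⟨k₀, ⟨(y : ℕ) + t, h⟩⟩ else 0 :=
        fun y => nu_pow_apply rfl t w y
      have hkey : Pi.single (⟨k₀, x⟩ : BIdx s) (1 : ℝ)
          = cc⁻¹ • ((ν ^ t) w - ∑ y ∈ Finset.univ.filter (fun y : Fin (s k₀) => (y : ℕ) < n),
              (ν ^ t) w ⟨k₀, y⟩ • (Pi.single (⟨k₀, y⟩ : BIdx s) (1 : ℝ) : BIdx s → ℝ)) := by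
        funext q
        obtain ⟨k', x'⟩ := q
        rw [Pi.smul_apply, Pi.sub_apply, Finset.sum_apply]
        by_cases hk : k' = k₀
        · subst hk
          have hterm : ∀ y : Fin (s k'),
              ((ν ^ t) w ⟨k', y⟩ • (Pi.single (⟨k', y⟩ : BIdx s) (1 : ℝ) : BIdx s → ℝ)) ⟨k', x'⟩
              = if x' = y then (ν ^ t) w ⟨k', y⟩ else 0 := by
            intro y
            rw [Pi.smul_apply, Pi.single_apply, if_congr (hsig x' y) rfl rfl]
            by_cases hxy : x' = y <;> simp [hxy]
          rw [Finset.sum_congr rfl (fun y _ => hterm y), Finset.sum_ite_eq]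
          have hL : (Pi.single (⟨k', x⟩ : BIdx s) (1 : ℝ) : BIdx s → ℝ) ⟨k', x'⟩
              = if (x' : ℕ) = n then (1 : ℝ) else 0 := by
            rw [Pi.single_apply, if_congr ((hsig x' x).trans (Fin.ext_iff.trans (by rw [hxn]))) rfl rfl]
          rw [hL]
          rcases lt_trichotomy (x' : ℕ) n with hlt | heq | hgt
          · rw [if_neg (by omega), if_pos (by simp [hlt]), smul_eq_mul]
            simp [hlt]
          · have hx'x : x' = x := Fin.ext (by omega)
            rw [if_pos heq, if_neg (by simp [heq]), smul_eq_mul]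
            rw [hzval x', dif_pos (by omega)]
            have : (⟨(x' : ℕ) + t, by omega⟩ : Fin (s k')) =
                ⟨s k' - 1, Nat.sub_lt h0 Nat.one_pos⟩ :=
              Fin.ext (show (x' : ℕ) + t = s k' - 1 by omega)
            rw [this, ← hcc]
            rw [sub_zero]
            exact (inv_mul_cancel₀ htop).symm
          · rw [if_neg (by omega), if_neg (by simp; omega), smul_eq_mul]
            rw [hzval x', dif_neg (by omega)]
            ring
        · have hL : (Pi.single (⟨k₀, x⟩ : BIdx s) (1 : ℝ) : BIdx s → ℝ) ⟨k', x'⟩ = 0 := by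
            rw [Pi.single_apply, if_neg (fun h => hk (congrArg Sigma.fst h))]
          rw [hL, hzB ⟨k', x'⟩ hk]
          have hsum0 : ∀ y ∈ Finset.univ.filter (fun y : Fin (s k₀) => (y : ℕ) < n),
              ((ν ^ t) w ⟨k₀, y⟩ • (Pi.single (⟨k₀, y⟩ : BIdx s) (1 : ℝ) : BIdx s → ℝ)) ⟨k', x'⟩
                = 0 := by
            intro y _
            rw [Pi.smul_apply, Pi.single_apply, if_neg (fun h => hk (congrArg Sigma.fst h)),
              smul_zero]
          rw [Finset.sum_congr rfl hsum0, Finset.sum_const_zero]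
          simp
      rw [hkey]
      apply Submodule.smul_mem
      apply sub_mem hz
      apply Submodule.sum_mem
      intro y hy
      rw [Finset.mem_filter] at hy
      exact Submodule.smul_mem _ _ (ih (y : ℕ) hy.2 y rfl)
  exact fun x => main (x : ℕ) x rfl


section Lower

variable {l : ℕ} (lam : Fin l → ℝ) (α : Fin l → ℕ) (r : (i : Fin l) → Fin (α i) → ℕ)

-- notation shortcuts
local notation "κJ" => (i : Fin l) × Fin (α i)

open Polynomial in
theorem single_mem_ctrl {m : ℕ} (hlam : Function.Injective lam) (hr : ∀ i k, 0 < r i k)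
    (Bhat : Matrix (JIdx l α r) (Fin m) ℝ) (i : Fin l) (k : Fin (α i)) (j : Fin m)
    (hcol : ∀ q : JIdx l α r, q.1.1 = i →
      Bhat q j = if q = ⟨⟨i, k⟩, ⟨r i k - 1, Nat.sub_lt (hr i k) Nat.one_pos⟩⟩ then 1 else 0) :
    ∀ x : Fin (r i k), Pi.single (⟨⟨i, k⟩, x⟩ : JIdx l α r) (1 : ℝ) ∈
      ctrlSubspace (jordanMatrix l lam α r) Bhat := by
  classical
  set μJ : κJ → ℝ := fun p => lam p.1 with hμJ
  set sJ : κJ → ℕ := fun p => r p.1 p.2 with hsJ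
  have hf : (jordanMatrix l lam α r).mulVecLin = bd μJ sJ := rfl
  set f := bd μJ sJ with hfdef
  set W := LinearMap.range Bhat.mulVecLin with hW
  set C := invtGen f W with hC
  have hctrl : ctrlSubspace (jordanMatrix l lam α r) Bhat = C := by
    rw [ctrl_eq_invtGen, hf]
  rw [hctrl]
  have hCf : ∀ v ∈ C, f v ∈ C := fun v hv => invtGen_mem_invariant f W hv
  set K := Finset.univ.sup sJ with hKdef
  have hK : ∀ p : κJ, sJ p ≤ K := fun p => Finset.le_sup (Finset.mem_univ p)
  set v : JIdx l α r → ℝ := Bhat.mulVec (Pi.single j 1) with hv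
  have hvW : v ∈ W := ⟨Pi.single j 1, rfl⟩
  have hvq : ∀ q, v q = Bhat q j := by
    intro q
    rw [hv]
    simp [Matrix.mulVec_single]
  set u : JIdx l α r → ℝ :=
    Pi.single (⟨⟨i, k⟩, ⟨r i k - 1, Nat.sub_lt (hr i k) Nat.one_pos⟩⟩ : JIdx l α r) (1 : ℝ)
    with hu
  have huB : u ∈ blockSub sJ ⟨i, k⟩ := by
    intro q hq
    rw [hu, Pi.single_apply, if_neg (fun h => hq (congrArg Sigma.fst h))]
  set p₀ : Polynomial ℝ := ∏ i' ∈ Finset.univ.erase i, (X - Polynomial.C (lam i')) ^ K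
    with hp₀
  -- kill lemma: for z in a block of another eigenvalue, aeval f p₀ z = 0
  have hkill : ∀ (p : κJ), p.1 ≠ i → ∀ z ∈ blockSub sJ p, (Polynomial.aeval f p₀) z = 0 := by
    intro p hp z hz
    have hmem : p.1 ∈ Finset.univ.erase i := Finset.mem_erase.mpr ⟨hp, Finset.mem_univ _⟩
    have hfac : p₀ = (∏ i' ∈ (Finset.univ.erase i).erase p.1, (X - Polynomial.C (lam i')) ^ K)
        * (X - Polynomial.C (lam p.1)) ^ K := by
      rw [hp₀, ← Finset.mul_prod_erase _ _ hmem, mul_comm]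
    rw [hfac, _root_.map_mul, Module.End.mul_apply]
    have haevalnu : (Polynomial.aeval f) ((X - Polynomial.C (lam p.1)) ^ K)
        = (nu μJ sJ (lam p.1)) ^ K := by
      rw [map_pow, map_sub, Polynomial.aeval_X, Polynomial.aeval_C]
      rfl
    rw [haevalnu]
    have : ((nu μJ sJ (μJ p)) ^ K) z = 0 := nu_pow_kill hz K (hK p)
    rw [show lam p.1 = μJ p from rfl, this, map_zero]
  -- the product preserves the block and multiplies the top coefficient
  have hprod : ∀ T : Finset (Fin l), i ∉ T → ∀ z ∈ blockSub sJ (⟨i, k⟩ : κJ),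
      (Polynomial.aeval f (∏ i' ∈ T, (X - Polynomial.C (lam i')) ^ K)) z ∈ blockSub sJ ⟨i, k⟩ ∧
      (Polynomial.aeval f (∏ i' ∈ T, (X - Polynomial.C (lam i')) ^ K)) z
          ⟨⟨i, k⟩, ⟨r i k - 1, Nat.sub_lt (hr i k) Nat.one_pos⟩⟩
        = (∏ i' ∈ T, (lam i - lam i') ^ K) *
            z ⟨⟨i, k⟩, ⟨r i k - 1, Nat.sub_lt (hr i k) Nat.one_pos⟩⟩ := by
    intro T
    induction T using Finset.induction_on with
    | empty => intro _ z hz; simpa using hz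
    | @insert a T ha ih =>
      intro hiT z hz
      have hiT' : i ∉ T := fun h => hiT (Finset.mem_insert_of_mem h)
      have hia : i ≠ a := fun h => hiT (h ▸ Finset.mem_insert_self a T)
      obtain ⟨ih1, ih2⟩ := ih hiT' z hz
      rw [Finset.prod_insert ha, Finset.prod_insert ha, _root_.map_mul, Module.End.mul_apply]
      set z' := (Polynomial.aeval f) (∏ i' ∈ T, (X - Polynomial.C (lam i')) ^ K) z with hz'
      have haevalnu : (Polynomial.aeval f) ((X - Polynomial.C (lam a)) ^ K)
          = (nu μJ sJ (lam a)) ^ K := by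
        rw [map_pow, map_sub, Polynomial.aeval_X, Polynomial.aeval_C]
        rfl
      rw [haevalnu]
      constructor
      · exact pow_mem_inv _ _ (fun w hw => nu_mem_blockSub hw) K z' ih1
      · have htop := nu_pow_top (μ := μJ) (s := sJ) (c := lam a) (k₀ := (⟨i, k⟩ : κJ))
          (hr i k) K z'
        rw [htop, ih2]
        have : μJ (⟨i, k⟩ : κJ) = lam i := rfl
        rw [this]
        ring
  set d : JIdx l α r → ℝ := v - u with hd
  have hdi : ∀ q : JIdx l α r, q.1.1 = i → d q = 0 := by
    intro q hq
    rw [hd, Pi.sub_apply, hvq q, hcol q hq, hu, Pi.single_apply]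
    by_cases hq2 : q = ⟨⟨i, k⟩, ⟨r i k - 1, Nat.sub_lt (hr i k) Nat.one_pos⟩⟩ <;>
      simp [hq2]
  have hgd : (Polynomial.aeval f p₀) d = 0 := by
    have hdecomp : d = ∑ p : κJ, (fun q : JIdx l α r => if q.1 = p then d q else 0) := by
      funext q
      rw [Finset.sum_apply]
      rw [Finset.sum_ite_eq Finset.univ q.1 (fun _ => d q)]
      simp
    rw [hdecomp, map_sum]
    apply Finset.sum_eq_zero
    intro p _
    by_cases hpi : p.1 = i
    · have hzero : (fun q : JIdx l α r => if q.1 = p then d q else 0) = 0 := by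
        funext q
        by_cases hqp : q.1 = p
        · rw [if_pos hqp, hdi q (by rw [hqp, hpi])]
          rfl
        · rw [if_neg hqp]
          rfl
      rw [hzero, map_zero]
    · apply hkill p hpi
      intro q hq
      exact if_neg hq
  have hgvu : (Polynomial.aeval f p₀) v = (Polynomial.aeval f p₀) u := by
    have hvud : v = u + d := by rw [hd, add_sub_cancel]
    rw [hvud, map_add, hgd, add_zero]
  have hwC : (Polynomial.aeval f p₀) u ∈ C :=
    hgvu ▸ aeval_mem_inv f C hCf p₀ v (le_invtGen f W hvW)
  obtain ⟨hwB, hwtop⟩ := hprod (Finset.univ.erase i) (by simp) u huB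
  have hwB' : (Polynomial.aeval f p₀) u ∈ blockSub sJ ⟨i, k⟩ := by
    rw [hp₀]; exact hwB
  have hcc : (∏ i' ∈ Finset.univ.erase i, (lam i - lam i') ^ K) ≠ 0 := by
    apply Finset.prod_ne_zero_iff.mpr
    intro i' hi'
    apply pow_ne_zero
    apply sub_ne_zero_of_ne
    intro h
    exact (Finset.mem_erase.mp hi').1 (hlam h).symm
  have hutop : u ⟨⟨i, k⟩, ⟨r i k - 1, Nat.sub_lt (hr i k) Nat.one_pos⟩⟩ = 1 :=
    Pi.single_eq_same _ _
  have hwtop' : (Polynomial.aeval f p₀) u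
      ⟨⟨i, k⟩, ⟨r i k - 1, Nat.sub_lt (hr i k) Nat.one_pos⟩⟩ ≠ 0 := by
    rw [hp₀, hwtop, hutop, mul_one]
    exact hcc
  have hP : ∀ z ∈ C, nu μJ sJ (μJ (⟨i, k⟩ : κJ)) z ∈ C := by
    intro z hz
    have hnu : nu μJ sJ (μJ (⟨i, k⟩ : κJ)) z = f z - (μJ (⟨i, k⟩ : κJ)) • z := by
      simp [nu, LinearMap.sub_apply]
      rfl
    rw [hnu]
    exact sub_mem (hCf z hz) (Submodule.smul_mem _ _ hz)
  intro x
  exact single_mem_of_top (μ := μJ) (k₀ := (⟨i, k⟩ : κJ)) C hP _ hwC hwB' (hr i k) hwtop' x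

end Lower

end Stmt4Aux


namespace Stmt4Aux

lemma jidx_eq_iff {l : ℕ} {α : Fin l → ℕ} {r : (i : Fin l) → Fin (α i) → ℕ}
    (i : Fin l) (k1 k2 : Fin (α i)) (x1 : Fin (r i k1)) (x2 : Fin (r i k2)) :
    (⟨⟨i, k1⟩, x1⟩ : JIdx l α r) = ⟨⟨i, k2⟩, x2⟩ ↔ k1 = k2 ∧ (x1 : ℕ) = (x2 : ℕ) := by
  constructor
  · intro h
    have h1 : (⟨i, k1⟩ : (i : Fin l) × Fin (α i)) = ⟨i, k2⟩ := congrArg Sigma.fst h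
    have hk : k1 = k2 := eq_of_heq (Sigma.mk.inj_iff.mp h1).2
    subst hk
    refine ⟨rfl, ?_⟩
    have hx : x1 = x2 := eq_of_heq (Sigma.mk.inj_iff.mp h).2
    rw [hx]
  · rintro ⟨rfl, hx⟩
    have : x1 = x2 := Fin.ext hx
    rw [this]

end Stmt4Aux

/-- The explicit choice of `B̂` (zero rows except at last rows of
Jordan blocks; for `α_i ≥ m` the `m` largest blocks of `λ_i` get the standard basis
row vectors `e_1, …, e_m`, the remaining last rows of `λ_i` being zero; for `α_i < m`
the `k`-th block of `λ_i` gets `e_k`) maximizes the dimension of the controllable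
subspace of `(J, ·)` over all matrices in `ℝ^{n×m}`. -/
theorem stmt4 (l m : ℕ) (lam : Fin l → ℝ) (hlam : Function.Injective lam)
    (α : Fin l → ℕ) (r : (i : Fin l) → Fin (α i) → ℕ) (hr : ∀ i k, 0 < r i k)
    (Bhat : Matrix (JIdx l α r) (Fin m) ℝ)
    -- every row of `B̂` not aligned with the last row of a Jordan block is zero
    (hzero : ∀ p : JIdx l α r, ((p.2 : ℕ) + 1 ≠ r p.1.1 p.1.2) → ∀ c, Bhat p c = 0)
    -- case `α_i ≥ m`: there are indices `β_{i1}, …, β_{im}` of blocks of `λ_i` whose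
    -- sizes are the `m` largest (in descending order), the corresponding last rows are
    -- the standard basis rows `e_1, …, e_m`, and all other last rows of `λ_i` are zero
    (hbig : ∀ i : Fin l, m ≤ α i → ∃ β : Fin m → Fin (α i),
      Function.Injective β ∧
      (∀ j j' : Fin m, j ≤ j' → r i (β j') ≤ r i (β j)) ∧
      (∀ k : Fin (α i), k ∉ Set.range β →
        (∀ j : Fin m, r i k ≤ r i (β j)) ∧ lastRow hr Bhat i k = 0) ∧
      (∀ j : Fin m, lastRow hr Bhat i (β j) = fun c : Fin m => if c = j then (1 : ℝ) else 0))
    -- case `α_i < m`: the last row of the `k`-th block of `λ_i` is the `k`-th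
    -- standard basis row vector of `ℝ^m`
    (hsmall : ∀ i : Fin l, α i < m → ∀ k : Fin (α i),
      lastRow hr Bhat i k = fun c : Fin m => if (c : ℕ) = (k : ℕ) then (1 : ℝ) else 0) :
    ∀ B' : Matrix (JIdx l α r) (Fin m) ℝ,
      Module.finrank ℝ (ctrlSubspace (jordanMatrix l lam α r) B') ≤
        Module.finrank ℝ (ctrlSubspace (jordanMatrix l lam α r) Bhat) := by
  classical
  intro B'
  have hSex : ∀ i : Fin l, ∃ S : Finset (Fin (α i)),
      (min m (α i) ≤ S.card) ∧ (∀ k ∉ S, ∀ j ∈ S, r i k ≤ r i j) ∧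
      (∀ k ∈ S, ∃ j : Fin m, ∀ q : JIdx l α r, q.1.1 = i →
        Bhat q j = if q = ⟨⟨i, k⟩, ⟨r i k - 1, Nat.sub_lt (hr i k) Nat.one_pos⟩⟩
          then 1 else 0) := by
    intro i
    by_cases hαm : m ≤ α i
    · obtain ⟨β, hβinj, _, hother, hβrows⟩ := hbig i hαm
      refine ⟨Finset.image β Finset.univ, ?_, ?_, ?_⟩
      · rw [Finset.card_image_of_injective _ hβinj, Finset.card_univ, Fintype.card_fin]
        exact min_le_left _ _
      · intro k hk j' hj'
        have hk' : k ∉ Set.range β := by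
          intro ⟨j0, hj0⟩
          exact hk (Finset.mem_image.mpr ⟨j0, Finset.mem_univ _, hj0⟩)
        obtain ⟨j0, _, rfl⟩ := Finset.mem_image.mp hj'
        exact (hother k hk').1 j0
      · intro k hk
        obtain ⟨j0, _, rfl⟩ := Finset.mem_image.mp hk
        refine ⟨j0, ?_⟩
        rintro ⟨⟨i', k''⟩, x⟩ hqi
        dsimp at hqi
        subst hqi
        by_cases hlast : (x : ℕ) + 1 = r i' k''
        · have hx : x = ⟨r i' k'' - 1, Nat.sub_lt (hr i' k'') Nat.one_pos⟩ :=
            Fin.ext (show (x : ℕ) = r i' k'' - 1 by omega)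
          subst hx
          have hBval : Bhat ⟨⟨i', k''⟩, ⟨r i' k'' - 1, Nat.sub_lt (hr i' k'') Nat.one_pos⟩⟩ j0
              = lastRow hr Bhat i' k'' j0 := rfl
          rw [hBval]
          by_cases hrange : k'' ∈ Set.range β
          · obtain ⟨j1, rfl⟩ := hrange
            rw [hβrows j1]
            dsimp only
            by_cases hj : j0 = j1
            · subst hj
              rw [if_pos rfl, if_pos rfl]
            · rw [if_neg hj, if_neg]
              intro h
              have := ((Stmt4Aux.jidx_eq_iff i' (β j1) (β j0) _ _).mp h).1
              exact hj (hβinj this).symm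
          · rw [(hother k'' hrange).2]
            rw [if_neg]
            · rfl
            · intro h
              have := ((Stmt4Aux.jidx_eq_iff i' k'' (β j0) _ _).mp h).1
              exact hrange ⟨j0, this.symm⟩
        · rw [hzero ⟨⟨i', k''⟩, x⟩ hlast j0, if_neg]
          intro h
          obtain ⟨hk2, hx2⟩ := (Stmt4Aux.jidx_eq_iff i' k'' (β j0) _ _).mp h
          subst hk2
          have hx3 : (x : ℕ) = r i' (β j0) - 1 := hx2
          have hpos := hr i' (β j0)
          omega
    · push_neg at hαm
      refine ⟨Finset.univ, ?_, ?_, ?_⟩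
      · rw [Finset.card_univ, Fintype.card_fin]
        exact min_le_right _ _
      · intro k hk
        exact absurd (Finset.mem_univ k) hk
      · intro k _
        refine ⟨⟨(k : ℕ), lt_trans k.isLt hαm⟩, ?_⟩
        rintro ⟨⟨i', k''⟩, x⟩ hqi
        dsimp at hqi
        subst hqi
        by_cases hlast : (x : ℕ) + 1 = r i' k''
        · have hx : x = ⟨r i' k'' - 1, Nat.sub_lt (hr i' k'') Nat.one_pos⟩ :=
            Fin.ext (show (x : ℕ) = r i' k'' - 1 by omega)
          subst hx
          have hBval : Bhat ⟨⟨i', k''⟩, ⟨r i' k'' - 1, Nat.sub_lt (hr i' k'') Nat.one_pos⟩⟩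
              ⟨(k : ℕ), lt_trans k.isLt hαm⟩
              = lastRow hr Bhat i' k'' ⟨(k : ℕ), lt_trans k.isLt hαm⟩ := rfl
          rw [hBval, hsmall i' hαm k'']
          dsimp only
          by_cases hkk : k'' = k
          · subst hkk
            rw [if_pos rfl, if_pos rfl]
          · rw [if_neg, if_neg]
            · intro h
              exact hkk ((Stmt4Aux.jidx_eq_iff i' k'' k _ _).mp h).1
            · intro h
              exact hkk (Fin.ext h).symm
        · rw [hzero ⟨⟨i', k''⟩, x⟩ hlast _, if_neg]
          intro h
          obtain ⟨hk2, hx2⟩ := (Stmt4Aux.jidx_eq_iff i' k'' k _ _).mp h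
          subst hk2
          have hx3 : (x : ℕ) = r i' k'' - 1 := hx2
          have hpos := hr i' k''
          omega
  choose S hS1 hS2 hS3 using hSex
  have hup := Stmt4Aux.global_upper lam α r m S hS1 hS2 B'
  set Q : Finset (JIdx l α r) := Finset.univ.filter (fun q => q.1.2 ∈ S q.1.1) with hQ
  have hsingle : ∀ q ∈ Q, (Pi.single q (1 : ℝ) : JIdx l α r → ℝ) ∈
      ctrlSubspace (jordanMatrix l lam α r) Bhat := by
    rintro ⟨⟨i, k⟩, x⟩ hq
    rw [hQ, Finset.mem_filter] at hq
    obtain ⟨j, hcol⟩ := hS3 i k hq.2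
    exact Stmt4Aux.single_mem_ctrl lam α r hlam hr Bhat i k j hcol x
  -- lower bound via linear independence
  have hli : LinearIndependent ℝ
      (fun q : {x // x ∈ Q} => (Pi.single (q : JIdx l α r) (1 : ℝ) : JIdx l α r → ℝ)) := by
    have h1 := (Pi.basisFun ℝ (JIdx l α r)).linearIndependent
    have h2 := h1.comp (fun q : {x // x ∈ Q} => (q : JIdx l α r)) Subtype.val_injective
    have h3 : (fun q : {x // x ∈ Q} => (Pi.single (q : JIdx l α r) (1 : ℝ) : JIdx l α r → ℝ))
        = (⇑(Pi.basisFun ℝ (JIdx l α r)) ∘ fun q : {x // x ∈ Q} => (q : JIdx l α r)) := by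
      funext q
      simp [Function.comp, Pi.basisFun_apply]
    rw [h3]
    exact h2
  have hspan := finrank_span_eq_card hli
  have hsub : Submodule.span ℝ (Set.range
      (fun q : {x // x ∈ Q} => (Pi.single (q : JIdx l α r) (1 : ℝ) : JIdx l α r → ℝ)))
      ≤ ctrlSubspace (jordanMatrix l lam α r) Bhat := by
    rw [Submodule.span_le]
    rintro _ ⟨q, rfl⟩
    exact hsingle q q.2
  have hlow := Submodule.finrank_mono hsub
  rw [hspan, Fintype.card_coe] at hlow
  -- counting
  have hQcard : Q.card = ∑ i, ∑ k ∈ S i, r i k := by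
    rw [hQ, Finset.card_filter]
    rw [← Finset.univ_sigma_univ, Finset.sum_sigma]
    have hinner : ∀ p : (i : Fin l) × Fin (α i),
        (∑ x : Fin (r p.1 p.2), if p.2 ∈ S p.1 then (1 : ℕ) else 0)
          = if p.2 ∈ S p.1 then r p.1 p.2 else 0 := by
      intro p
      by_cases hp : p.2 ∈ S p.1 <;> simp [hp]
    rw [Finset.sum_congr rfl (fun p _ => hinner p)]
    rw [← Finset.univ_sigma_univ, Finset.sum_sigma]
    apply Finset.sum_congr rfl
    intro i _
    dsimp only
    rw [← Finset.sum_filter]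
    congr 1
    ext
    simp
  omega
end

section
/- Let A ∈ ℝ^{n×n}, B ∈ ℝ^{n×k}, C ∈ ℝ^{m×n}, and suppose 𝒱* ⊆ ℝ^n is the greatest element, with respect to inclusion, of the family of subspaces { V : V ⊆ Ker C and there exists F ∈ ℝ^{k×n} with (A+BF)V ⊆ V } (the maximal (A,B)-invariant subspace contained in Ker C). Then max over F ∈ ℝ^{k×n} of dim Ker Ω(C,F) equals dim 𝒱*: namely, dim Ker Ω(C,F) ≤ dim 𝒱* for every F ∈ ℝ^{k×n}, and there exists F₀ ∈ ℝ^{k×n} with Ker Ω(C,F₀) = 𝒱*, so that dim Ker Ω(C,F₀) = dim 𝒱*. -/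
open Matrix

/-- `Ker C = { x : Cx = 0 }` as a subspace of `ℝ^n`. -/
noncomputable def kerMat {m n : ℕ} (C : Matrix (Fin m) (Fin n) ℝ) :
    Submodule ℝ (Fin n → ℝ) :=
  LinearMap.ker C.mulVecLin

/-- `Im B = { Bu : u ∈ ℝ^k }` as a subspace of `ℝ^n`. -/
noncomputable def imMat {n k : ℕ} (B : Matrix (Fin n) (Fin k) ℝ) :
    Submodule ℝ (Fin n → ℝ) :=
  LinearMap.range B.mulVecLin

/-- The unobservable subspace `Ker Ω(C,F)`: the kernel of the observability matrix
obtained by stacking `C, C(A+BF), …, C(A+BF)^{n-1}`. -/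
noncomputable def unobs {n k m : ℕ} (A : Matrix (Fin n) (Fin n) ℝ)
    (B : Matrix (Fin n) (Fin k) ℝ) (C : Matrix (Fin m) (Fin n) ℝ)
    (F : Matrix (Fin k) (Fin n) ℝ) : Submodule ℝ (Fin n → ℝ) :=
  ⨅ j ∈ Finset.range n, LinearMap.ker (C * (A + B * F) ^ j).mulVecLin

lemma mem_unobs_iff {n k m : ℕ} (A : Matrix (Fin n) (Fin n) ℝ)
    (B : Matrix (Fin n) (Fin k) ℝ) (C : Matrix (Fin m) (Fin n) ℝ)
    (F : Matrix (Fin k) (Fin n) ℝ) (x : Fin n → ℝ) :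
    x ∈ unobs A B C F ↔ ∀ j < n, (C * (A + B * F) ^ j).mulVec x = 0 := by
  simp [unobs, Submodule.mem_iInf, LinearMap.mem_ker, mulVecLin_apply]

lemma pow_dim_eq_neg_sum {n : ℕ} (M : Matrix (Fin n) (Fin n) ℝ) :
    M ^ n = -∑ i ∈ Finset.range n, M.charpoly.coeff i • M ^ i := by
  have h0 : (Polynomial.aeval M) M.charpoly = 0 := Matrix.aeval_self_charpoly M
  have hd : M.charpoly.natDegree = n := by
    simpa using Matrix.charpoly_natDegree_eq_dim M
  rw [Polynomial.aeval_eq_sum_range, hd, Finset.sum_range_succ] at h0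
  have hc : M.charpoly.coeff n = 1 := by
    have := (Matrix.charpoly_monic M).coeff_natDegree
    rwa [hd] at this
  rw [hc, one_smul] at h0
  exact eq_neg_of_add_eq_zero_right h0

lemma unobs_mem {n k m : ℕ} (A : Matrix (Fin n) (Fin n) ℝ)
    (B : Matrix (Fin n) (Fin k) ℝ) (C : Matrix (Fin m) (Fin n) ℝ)
    (F : Matrix (Fin k) (Fin n) ℝ) :
    unobs A B C F ≤ kerMat C ∧
      Submodule.map (A + B * F).mulVecLin (unobs A B C F) ≤ unobs A B C F := by
  set M := A + B * F with hM
  have hCn : ∀ x, x ∈ unobs A B C F → (C * M ^ n).mulVec x = 0 := by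
    intro x hx
    rw [mem_unobs_iff] at hx
    have : C * M ^ n = -∑ i ∈ Finset.range n, M.charpoly.coeff i • (C * M ^ i) := by
      rw [pow_dim_eq_neg_sum M, Matrix.mul_neg, Matrix.mul_sum]
      congr 1
      exact Finset.sum_congr rfl fun i _ => Matrix.mul_smul C (M.charpoly.coeff i) (M ^ i)
    rw [this]
    rw [Matrix.neg_mulVec]
    have hsum : (∑ i ∈ Finset.range n, M.charpoly.coeff i • (C * M ^ i)).mulVec x = 0 := by
      have : ∀ N : Matrix (Fin m) (Fin n) ℝ, N.mulVec x = N.mulVecLin x := fun N => rfl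
      rw [this]
      have hlin : (∑ i ∈ Finset.range n, M.charpoly.coeff i • (C * M ^ i)).mulVecLin
          = ∑ i ∈ Finset.range n, (M.charpoly.coeff i • (C * M ^ i)).mulVecLin := by
        exact map_sum (AddMonoidHom.mk' Matrix.mulVecLin Matrix.mulVecLin_add) _ _
      rw [hlin]
      rw [LinearMap.coe_sum, Finset.sum_apply]
      apply Finset.sum_eq_zero
      intro i hi
      show (M.charpoly.coeff i • (C * M ^ i)).mulVec x = 0
      rw [Matrix.smul_mulVec, hx i (Finset.mem_range.mp hi), smul_zero]
    rw [hsum, neg_zero]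
  constructor
  · intro x hx
    rcases Nat.eq_zero_or_pos n with h0 | hpos
    · subst h0
      show C.mulVec x = 0
      have : x = 0 := Subsingleton.elim x 0
      simp [this]
    · rw [mem_unobs_iff] at hx
      have := hx 0 hpos
      show C.mulVec x = 0
      simpa using this
  · rintro y ⟨x, hx, rfl⟩
    rw [mem_unobs_iff]
    intro j hj
    rw [mulVecLin_apply, Matrix.mulVec_mulVec, ← hM, Matrix.mul_assoc, ← pow_succ]
    rcases lt_or_eq_of_le (Nat.succ_le_of_lt hj) with h | h
    · exact (mem_unobs_iff A B C F x).mp hx (j + 1) h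
    · rw [(by omega : j + 1 = n)]; exact hCn x hx

/-- If `𝒱*` is the greatest (A,B)-invariant subspace contained in
`Ker C`, then `max_F dim Ker Ω(C,F) = dim 𝒱*`: every `F` satisfies
`dim Ker Ω(C,F) ≤ dim 𝒱*`, and some `F₀` achieves `Ker Ω(C,F₀) = 𝒱*`, hence
`dim Ker Ω(C,F₀) = dim 𝒱*`. -/
theorem stmt11 (n k m : ℕ) (A : Matrix (Fin n) (Fin n) ℝ)
    (B : Matrix (Fin n) (Fin k) ℝ) (C : Matrix (Fin m) (Fin n) ℝ)
    (Vstar : Submodule ℝ (Fin n → ℝ))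
    (hVstar : IsGreatest {V : Submodule ℝ (Fin n → ℝ) | V ≤ kerMat C ∧
      ∃ F : Matrix (Fin k) (Fin n) ℝ, Submodule.map (A + B * F).mulVecLin V ≤ V} Vstar) :
    (∀ F : Matrix (Fin k) (Fin n) ℝ,
        Module.finrank ℝ (unobs A B C F) ≤ Module.finrank ℝ Vstar) ∧
    ∃ F₀ : Matrix (Fin k) (Fin n) ℝ, unobs A B C F₀ = Vstar ∧
      Module.finrank ℝ (unobs A B C F₀) = Module.finrank ℝ Vstar := by
  have hle : ∀ F : Matrix (Fin k) (Fin n) ℝ, unobs A B C F ≤ Vstar := by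
    intro F
    exact hVstar.2 ⟨(unobs_mem A B C F).1, F, (unobs_mem A B C F).2⟩
  refine ⟨fun F => Submodule.finrank_mono (hle F), ?_⟩
  obtain ⟨hVker, F₀, hF₀⟩ := hVstar.1
  have heq : unobs A B C F₀ = Vstar := by
    refine le_antisymm (hle F₀) ?_
    intro x hx
    rw [mem_unobs_iff]
    intro j _
    have hpow : ∀ i : ℕ, ((A + B * F₀) ^ i).mulVec x ∈ Vstar := by
      intro i
      induction i with
      | zero => simpa using hx
      | succ i ih =>
        have : ((A + B * F₀) ^ (i + 1)).mulVec x
            = (A + B * F₀).mulVecLin (((A + B * F₀) ^ i).mulVec x) := by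
          rw [mulVecLin_apply, Matrix.mulVec_mulVec, ← pow_succ']
        rw [this]
        exact hF₀ ⟨_, ih, rfl⟩
    have := hVker (hpow j)
    rw [← Matrix.mulVec_mulVec]
    exact this
  exact ⟨F₀, heq, by rw [heq]⟩
end

section
/- Let A ∈ ℝ^{n×n}, B ∈ ℝ^{n×k}, C ∈ ℝ^{m×n}, and suppose 𝒱* ⊆ ℝ^n is the greatest element, with respect to inclusion, of the family of subspaces { V : V ⊆ Ker C and there exists F ∈ ℝ^{k×n} with (A+BF)V ⊆ V }. Then a matrix F ∈ ℝ^{k×n} maximizes dim Ker Ω(C,F) over all matrices in ℝ^{k×n} if and only if F is a friend of 𝒱*, i.e., (A+BF)𝒱* ⊆ 𝒱*. -/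
open Matrix

lemma finset_sum_mulVec {ι : Type*} {p q : ℕ} (s : Finset ι)
    (f : ι → Matrix (Fin p) (Fin q) ℝ) (x : Fin q → ℝ) :
    (∑ i ∈ s, f i).mulVec x = ∑ i ∈ s, (f i).mulVec x := by
  classical
  induction s using Finset.induction with
  | empty => simp
  | insert _ _ h ih => rw [Finset.sum_insert h, Finset.sum_insert h, Matrix.add_mulVec, ih]

lemma pow_n_kernel {n m : ℕ} (M : Matrix (Fin n) (Fin n) ℝ)
    (C : Matrix (Fin m) (Fin n) ℝ) (x : Fin n → ℝ)
    (h : ∀ j < n, (C * M ^ j).mulVec x = 0) :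
    (C * M ^ n).mulVec x = 0 := by
  have hmonic := M.charpoly_monic
  have hdeg : M.charpoly.natDegree = n := by simpa using M.charpoly_natDegree_eq_dim
  have hch := M.aeval_self_charpoly
  rw [Polynomial.aeval_eq_sum_range, hdeg, Finset.sum_range_succ] at hch
  have hcoeff : M.charpoly.coeff n = 1 := by
    have := hmonic.coeff_natDegree; rwa [hdeg] at this
  rw [hcoeff, one_smul] at hch
  have hx := congrArg (fun N => N.mulVec x) hch
  simp only [Matrix.add_mulVec, Matrix.zero_mulVec, finset_sum_mulVec,
    Matrix.smul_mulVec] at hx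
  have hMn : (M ^ n).mulVec x =
      -∑ i ∈ Finset.range n, M.charpoly.coeff i • (M ^ i).mulVec x :=
    eq_neg_of_add_eq_zero_right hx
  rw [← Matrix.mulVec_mulVec, hMn]
  have hz : ∀ i ∈ Finset.range n, C.mulVec (M.charpoly.coeff i • (M ^ i).mulVec x) = 0 := by
    intro i hi
    rw [Matrix.mulVec_smul, Matrix.mulVec_mulVec, h i (Finset.mem_range.mp hi), smul_zero]
  calc C.mulVec (-∑ i ∈ Finset.range n, M.charpoly.coeff i • (M ^ i).mulVec x)
      = -C.mulVec (∑ i ∈ Finset.range n, M.charpoly.coeff i • (M ^ i).mulVec x) := by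
        rw [Matrix.mulVec_neg]
    _ = -∑ i ∈ Finset.range n, C.mulVec (M.charpoly.coeff i • (M ^ i).mulVec x) := by
        simp only [← Matrix.mulVecLin_apply, map_sum]
    _ = 0 := by rw [Finset.sum_congr rfl hz]; simp

lemma unobs_le_kerMat {n k m : ℕ} (A : Matrix (Fin n) (Fin n) ℝ)
    (B : Matrix (Fin n) (Fin k) ℝ) (C : Matrix (Fin m) (Fin n) ℝ)
    (F : Matrix (Fin k) (Fin n) ℝ) :
    unobs A B C F ≤ kerMat C := by
  intro x hx
  rw [mem_unobs_iff] at hx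
  show C.mulVecLin x = 0
  rcases Nat.eq_zero_or_pos n with hn | hn
  · subst hn
    have : x = 0 := Subsingleton.elim x 0
    rw [this, map_zero]
  · have := hx 0 hn
    rw [pow_zero, Matrix.mul_one] at this
    rwa [Matrix.mulVecLin_apply]

lemma unobs_invariant {n k m : ℕ} (A : Matrix (Fin n) (Fin n) ℝ)
    (B : Matrix (Fin n) (Fin k) ℝ) (C : Matrix (Fin m) (Fin n) ℝ)
    (F : Matrix (Fin k) (Fin n) ℝ) :
    Submodule.map (A + B * F).mulVecLin (unobs A B C F) ≤ unobs A B C F := by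
  rintro _ ⟨x, hx, rfl⟩
  rw [SetLike.mem_coe, mem_unobs_iff] at hx
  rw [mem_unobs_iff]
  intro j hj
  rw [Matrix.mulVecLin_apply, Matrix.mulVec_mulVec, Matrix.mul_assoc, ← pow_succ]
  rcases lt_or_eq_of_le (Nat.succ_le_of_lt hj) with h1 | h1
  · exact hx _ h1
  · rw [show j + 1 = n from h1]; exact pow_n_kernel _ _ _ hx

lemma le_unobs {n k m : ℕ} (A : Matrix (Fin n) (Fin n) ℝ)
    (B : Matrix (Fin n) (Fin k) ℝ) (C : Matrix (Fin m) (Fin n) ℝ)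
    (F : Matrix (Fin k) (Fin n) ℝ) (V : Submodule ℝ (Fin n → ℝ))
    (h1 : V ≤ kerMat C)
    (h2 : Submodule.map (A + B * F).mulVecLin V ≤ V) :
    V ≤ unobs A B C F := by
  intro x hx
  rw [mem_unobs_iff]
  have key : ∀ j : ℕ, ((A + B * F) ^ j).mulVec x ∈ V := by
    intro j
    induction j with
    | zero => simpa using hx
    | succ j ih =>
        have : ((A + B * F) ^ (j + 1)).mulVec x
            = (A + B * F).mulVecLin (((A + B * F) ^ j).mulVec x) := by
          rw [Matrix.mulVecLin_apply, Matrix.mulVec_mulVec, ← pow_succ']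
        rw [this]
        exact h2 ⟨_, ih, rfl⟩
  intro j _
  have := h1 (key j)
  rwa [kerMat, LinearMap.mem_ker, Matrix.mulVecLin_apply, Matrix.mulVec_mulVec] at this

/-- (Paper's Proposition 2.) If `𝒱*` is the greatest
(A,B)-invariant subspace contained in `Ker C`, then `F` maximizes
`dim Ker Ω(C,·)` over `ℝ^{k×n}` iff `F` is a friend of `𝒱*`, i.e.
`(A+BF)𝒱* ⊆ 𝒱*`. -/
theorem stmt12 (n k m : ℕ) (A : Matrix (Fin n) (Fin n) ℝ)
    (B : Matrix (Fin n) (Fin k) ℝ) (C : Matrix (Fin m) (Fin n) ℝ)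
    (F : Matrix (Fin k) (Fin n) ℝ)
    (Vstar : Submodule ℝ (Fin n → ℝ))
    (hVstar : IsGreatest {V : Submodule ℝ (Fin n → ℝ) | V ≤ kerMat C ∧
      ∃ K : Matrix (Fin k) (Fin n) ℝ, Submodule.map (A + B * K).mulVecLin V ≤ V} Vstar) :
    (∀ F' : Matrix (Fin k) (Fin n) ℝ,
        Module.finrank ℝ (unobs A B C F') ≤ Module.finrank ℝ (unobs A B C F)) ↔
      Submodule.map (A + B * F).mulVecLin Vstar ≤ Vstar := by
  obtain ⟨⟨hVker, K, hK⟩, hGr⟩ := hVstar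
  -- every unobservable subspace is below Vstar
  have hle : ∀ F' : Matrix (Fin k) (Fin n) ℝ, unobs A B C F' ≤ Vstar := fun F' =>
    hGr ⟨unobs_le_kerMat A B C F', F', unobs_invariant A B C F'⟩
  -- the unobservable subspace of a friend equals Vstar
  have hKeq : unobs A B C K = Vstar :=
    le_antisymm (hle K) (le_unobs A B C K Vstar hVker hK)
  constructor
  · intro hmax
    have h1 : Module.finrank ℝ Vstar ≤ Module.finrank ℝ (unobs A B C F) := by
      rw [← hKeq]; exact hmax K
    have h2 : unobs A B C F = Vstar :=
      Submodule.eq_of_le_of_finrank_le (hle F) h1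
    calc Submodule.map (A + B * F).mulVecLin Vstar
        = Submodule.map (A + B * F).mulVecLin (unobs A B C F) := by rw [h2]
      _ ≤ unobs A B C F := unobs_invariant A B C F
      _ = Vstar := h2
  · intro hfriend F'
    have hFeq : unobs A B C F = Vstar :=
      le_antisymm (hle F) (le_unobs A B C F Vstar hVker hfriend)
    rw [hFeq]
    exact Submodule.finrank_mono (hle F')
end

section
/- Let A ∈ ℝ^{n×n}, B ∈ ℝ^{n×k}, C ∈ ℝ^{m×n}, F ∈ ℝ^{k×n}, and suppose 𝒱* ⊆ ℝ^n is the greatest element, with respect to inclusion, of the family { V : V ⊆ Ker C and there exists K ∈ ℝ^{k×n} with (A+BK)V ⊆ V }. If dim Ker Ω(C,F) = dim 𝒱*, then Ker Ω(C,F) = 𝒱* and F is a friend of 𝒱*, i.e., (A+BF)𝒱* ⊆ 𝒱*. -/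
open Matrix Polynomial

lemma cayley_pow (n : ℕ) (M : Matrix (Fin n) (Fin n) ℝ) :
    M ^ n = - ∑ i ∈ Finset.range n, M.charpoly.coeff i • M ^ i := by
  have hdeg : M.charpoly.natDegree = n := by simp [M.charpoly_natDegree_eq_dim]
  have hmonic := M.charpoly_monic
  have hCH := M.aeval_self_charpoly
  have := Polynomial.aeval_eq_sum_range (R := ℝ) (S := Matrix (Fin n) (Fin n) ℝ)
    (p := M.charpoly) M
  rw [hCH, hdeg, Finset.sum_range_succ] at this
  have hc : M.charpoly.coeff n = 1 := by
    have := hmonic.leadingCoeff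
    rwa [Polynomial.leadingCoeff, hdeg] at this
  rw [hc, one_smul] at this
  linear_combination (norm := abel) -this

lemma mem_unobs {n m : ℕ} {M : Matrix (Fin n) (Fin n) ℝ} {C : Matrix (Fin m) (Fin n) ℝ}
    {x : Fin n → ℝ}
    (h : x ∈ ⨅ j ∈ Finset.range n, LinearMap.ker (C * M ^ j).mulVecLin) :
    ∀ j, j < n → C.mulVec (M ^ j *ᵥ x) = 0 := by
  intro j hj
  simp only [Submodule.mem_iInf, LinearMap.mem_ker] at h
  have := h j (Finset.mem_range.mpr hj)
  rwa [mulVecLin_apply, ← mulVec_mulVec] at this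

lemma unobs_inv {n m : ℕ} (M : Matrix (Fin n) (Fin n) ℝ) (C : Matrix (Fin m) (Fin n) ℝ) :
    Submodule.map M.mulVecLin
      (⨅ j ∈ Finset.range n, LinearMap.ker (C * M ^ j).mulVecLin) ≤
      ⨅ j ∈ Finset.range n, LinearMap.ker (C * M ^ j).mulVecLin := by
  rintro _ ⟨x, hx, rfl⟩
  have hall := mem_unobs hx
  have hn : C.mulVec (M ^ n *ᵥ x) = 0 := by
    rw [cayley_pow n M]
    have : (- ∑ i ∈ Finset.range n, M.charpoly.coeff i • M ^ i) *ᵥ x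
        = - ∑ i ∈ Finset.range n, M.charpoly.coeff i • (M ^ i *ᵥ x) := by
      rw [neg_mulVec]
      congr 1
      classical
      induction (Finset.range n) using Finset.induction with
      | empty => simp
      | insert _ _ hni ih =>
          rw [Finset.sum_insert hni, Finset.sum_insert hni, add_mulVec,
            smul_mulVec, ih]
    rw [this]
    rw [show C.mulVec = C.mulVecLin from rfl]
    rw [map_neg, map_sum]
    simp only [_root_.map_smul]
    have : ∀ i ∈ Finset.range n, M.charpoly.coeff i • C.mulVecLin (M ^ i *ᵥ x) = 0 := by
      intro i hi
      rw [show C.mulVecLin (M ^ i *ᵥ x) = C.mulVec (M ^ i *ᵥ x) from rfl,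
        hall i (Finset.mem_range.mp hi), smul_zero]
    rw [Finset.sum_congr rfl this]
    simp
  simp only [Submodule.mem_iInf, LinearMap.mem_ker]
  intro j hj
  rw [mulVecLin_apply, mulVecLin_apply, mulVec_mulVec, Matrix.mul_assoc, ← pow_succ]
  rcases Nat.lt_or_ge (j + 1) n with h | h
  · rw [← mulVec_mulVec]; exact hall _ h
  · have : j + 1 = n := le_antisymm (Finset.mem_range.mp hj) h
    rw [this, ← mulVec_mulVec]; exact hn


/-- If `𝒱*` is the greatest (A,B)-invariant subspace contained in
`Ker C` and `dim Ker Ω(C,F) = dim 𝒱*`, then `Ker Ω(C,F) = 𝒱*` and `F` is a friend of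
`𝒱*`, i.e. `(A+BF)𝒱* ⊆ 𝒱*`. -/
theorem stmt15 (n k m : ℕ) (A : Matrix (Fin n) (Fin n) ℝ)
    (B : Matrix (Fin n) (Fin k) ℝ) (C : Matrix (Fin m) (Fin n) ℝ)
    (F : Matrix (Fin k) (Fin n) ℝ)
    (Vstar : Submodule ℝ (Fin n → ℝ))
    (hVstar : IsGreatest {V : Submodule ℝ (Fin n → ℝ) | V ≤ kerMat C ∧
      ∃ K : Matrix (Fin k) (Fin n) ℝ, Submodule.map (A + B * K).mulVecLin V ≤ V} Vstar)
    (hdim : Module.finrank ℝ (unobs A B C F) = Module.finrank ℝ Vstar) :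
    unobs A B C F = Vstar ∧
      Submodule.map (A + B * F).mulVecLin Vstar ≤ Vstar := by
  set M := A + B * F with hM
  have hker : unobs A B C F ≤ kerMat C := by
    rcases Nat.eq_zero_or_pos n with rfl | hn
    · intro x hx
      have : x = 0 := funext fun i => absurd i.2 (by omega)
      simp [this, kerMat]
    · intro x hx
      have := mem_unobs (M := M) (C := C) hx 0 hn
      simpa [kerMat, mulVecLin_apply] using this
  have hinv : Submodule.map M.mulVecLin (unobs A B C F) ≤ unobs A B C F :=
    unobs_inv M C
  have hmem : unobs A B C F ∈ {V : Submodule ℝ (Fin n → ℝ) | V ≤ kerMat C ∧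
      ∃ K : Matrix (Fin k) (Fin n) ℝ, Submodule.map (A + B * K).mulVecLin V ≤ V} :=
    ⟨hker, F, hinv⟩
  have hle : unobs A B C F ≤ Vstar := hVstar.2 hmem
  have heq : unobs A B C F = Vstar :=
    Submodule.eq_of_le_of_finrank_eq hle hdim
  exact ⟨heq, heq ▸ hinv⟩
end
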